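/- arXiv:2212.08199 — 4 statements merged into one kernel-verified Lean document; each statement's English description precedes it below -/
import Mathlib

section
/- Neural ODE limit (Theorem 4.2, first case). Fix d ≥ 1, an input x ∈ ℝ^d, an activation σ ∈ C³(ℝ,ℝ) with σ(0)=0, σ'(0)=1, bounded third derivative, and σ Lipschitz. Let Ā ∈ H¹([0,1], ℝ^{d×d}) and b̄ ∈ H¹([0,1], ℝ^d). For each L ∈ ℕ define the hidden states h_0^{(L)} = x and h_{k+1}^{(L)} = h_k^{(L)} + L^{-1} σ_d(Ā_{k/L} h_k^{(L)} + b̄_{k/L}) for k = 0,…,L−1, and the piecewise-constant interpolation H̄_t^{(L)} = h_k^{(L)} for k/L ≤ t < (k+1)/L (with H̄_1^{(L)} = h_L^{(L)}). Let H : [0,1] → ℝ^d be the solution of the neural ODE dH_t/dt = σ_d(Ā_t H_t + b̄_t) with H_0 = x. Then lim_{L→∞} sup_{0 ≤ t ≤ 1} ‖H_t − H̄_t^{(L)}‖ = 0. -/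
open MeasureTheory Filter Set

/-- Componentwise application of a scalar function to a vector in `ℝ^d`. -/
noncomputable def sigd {d : ℕ} (σ : ℝ → ℝ) (z : EuclideanSpace ℝ (Fin d)) :
    EuclideanSpace ℝ (Fin d) :=
  WithLp.toLp 2 (fun i => σ (z i))

set_option maxHeartbeats 1000000

lemma sigd_lipschitz {d : ℕ} {σ : ℝ → ℝ} {K : NNReal} (hσ : LipschitzWith K σ) :
    LipschitzWith K (sigd (d := d) σ) := by
  refine LipschitzWith.of_dist_le_mul fun x y => ?_
  rw [EuclideanSpace.dist_eq, EuclideanSpace.dist_eq]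
  have h1 : ∀ i, dist (sigd σ x i) (sigd σ y i) ^ 2 ≤ (K:ℝ)^2 * dist (x i) (y i) ^ 2 := by
    intro i
    have h2 := hσ.dist_le_mul (x i) (y i)
    have h3 : dist (sigd σ x i) (sigd σ y i) = dist (σ (x i)) (σ (y i)) := rfl
    rw [h3]
    nlinarith [dist_nonneg (x := σ (x i)) (y := σ (y i)), dist_nonneg (x := x i) (y := y i),
      K.coe_nonneg]
  calc Real.sqrt (∑ i, dist (sigd σ x i) (sigd σ y i) ^ 2)
      ≤ Real.sqrt (∑ i, (K:ℝ)^2 * dist (x i) (y i) ^ 2) :=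
        Real.sqrt_le_sqrt (Finset.sum_le_sum fun i _ => h1 i)
    _ = (K:ℝ) * Real.sqrt (∑ i, dist (x i) (y i) ^ 2) := by
        rw [← Finset.mul_sum, Real.sqrt_mul (by positivity), Real.sqrt_sq K.coe_nonneg]

/-- **Neural ODE limit (Theorem 4.2, first case).**
If `σ ∈ C³` with `σ(0) = 0`, `σ'(0) = 1`, bounded third derivative and `σ` Lipschitz,
and `Ā ∈ H¹([0,1], ℝ^{d×d})`, `b̄ ∈ H¹([0,1], ℝ^d)` (expressed by being primitives, on `[0,1]`,
of functions that are square-integrable on `[0,1]`), then the piecewise-constant interpolation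
`H̄ᴸ_t = h^{(L)}_⌊Lt⌋` of the ResNet hidden states `h^{(L)}_{k+1} = h^{(L)}_k +
L⁻¹ σ_d(Ā_{k/L} h^{(L)}_k + b̄_{k/L})`, `h^{(L)}_0 = x`, converges uniformly on `[0,1]`
to the solution `H` of the neural ODE `dH_t/dt = σ_d(Ā_t H_t + b̄_t)`, `H_0 = x`. -/
theorem neural_ode_limit
    (d : ℕ) (hd : 1 ≤ d) (x : EuclideanSpace ℝ (Fin d))
    -- activation function
    (σ : ℝ → ℝ) (hσC3 : ContDiff ℝ 3 σ) (hσ0 : σ 0 = 0) (hσ'0 : deriv σ 0 = 1)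
    (C3 : ℝ) (hσ3 : ∀ y : ℝ, |iteratedDeriv 3 σ y| ≤ C3)
    (K : NNReal) (hσLip : LipschitzWith K σ)
    -- weights: Ā, b̄ belong to H¹([0,1])
    (Abar : ℝ → (EuclideanSpace ℝ (Fin d) →L[ℝ] EuclideanSpace ℝ (Fin d)))
    (bbar : ℝ → EuclideanSpace ℝ (Fin d))
    (A' : ℝ → (EuclideanSpace ℝ (Fin d) →L[ℝ] EuclideanSpace ℝ (Fin d)))
    (b' : ℝ → EuclideanSpace ℝ (Fin d))
    (hA'L2 : MemLp A' 2 (volume.restrict (Icc (0:ℝ) 1)))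
    (hb'L2 : MemLp b' 2 (volume.restrict (Icc (0:ℝ) 1)))
    (hAbar : ∀ t ∈ Icc (0:ℝ) 1, Abar t = Abar 0 + ∫ s in (0:ℝ)..t, A' s)
    (hbbar : ∀ t ∈ Icc (0:ℝ) 1, bbar t = bbar 0 + ∫ s in (0:ℝ)..t, b' s)
    -- hidden states of the residual network of depth L
    (h : ℕ → ℕ → EuclideanSpace ℝ (Fin d))
    (hh0 : ∀ L : ℕ, h L 0 = x)
    (hhrec : ∀ L : ℕ, ∀ k < L, h L (k+1) =
      h L k + ((L:ℝ))⁻¹ • sigd σ (Abar ((k:ℝ)/(L:ℝ)) (h L k) + bbar ((k:ℝ)/(L:ℝ))))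
    -- solution of the neural ODE
    (H : ℝ → EuclideanSpace ℝ (Fin d)) (hH0 : H 0 = x)
    (hHode : ∀ t ∈ Icc (0:ℝ) 1, HasDerivAt H (sigd σ (Abar t (H t) + bbar t)) t) :
    Tendsto (fun L : ℕ => ⨆ t : Icc (0:ℝ) 1, ‖H t - h L ⌊(L:ℝ) * (t:ℝ)⌋₊‖)
      atTop (nhds 0) := by
  have hsig : LipschitzWith K (sigd (d := d) σ) := sigd_lipschitz hσLip
  have hsignorm : ∀ u v : EuclideanSpace ℝ (Fin d),
      ‖sigd σ u - sigd σ v‖ ≤ (K:ℝ) * ‖u - v‖ := by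
    intro u v
    have := hsig.dist_le_mul u v
    rwa [dist_eq_norm, dist_eq_norm] at this
  -- continuity of Abar, bbar, H on [0,1]
  have hIcc : IsCompact (Icc (0:ℝ) 1) := isCompact_Icc
  have hA'int : IntegrableOn A' (Icc (0:ℝ) 1) volume := hA'L2.integrable (by norm_num)
  have hb'int : IntegrableOn b' (Icc (0:ℝ) 1) volume := hb'L2.integrable (by norm_num)
  have huIcc : uIcc (0:ℝ) 1 = Icc (0:ℝ) 1 := uIcc_of_le zero_le_one
  have hAcont : ContinuousOn Abar (Icc (0:ℝ) 1) := by
    have hp : ContinuousOn (fun t => Abar 0 + ∫ s in (0:ℝ)..t, A' s) (Icc (0:ℝ) 1) := by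
      refine continuousOn_const.add ?_
      have := intervalIntegral.continuousOn_primitive_interval (a := (0:ℝ)) (b := 1)
        (μ := volume) (f := A') (by rwa [huIcc])
      rwa [huIcc] at this
    exact hp.congr fun t ht => hAbar t ht
  have hbcont : ContinuousOn bbar (Icc (0:ℝ) 1) := by
    have hp : ContinuousOn (fun t => bbar 0 + ∫ s in (0:ℝ)..t, b' s) (Icc (0:ℝ) 1) := by
      refine continuousOn_const.add ?_
      have := intervalIntegral.continuousOn_primitive_interval (a := (0:ℝ)) (b := 1)
        (μ := volume) (f := b') (by rwa [huIcc])
      rwa [huIcc] at this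
    exact hp.congr fun t ht => hbbar t ht
  have hHcont : ContinuousOn H (Icc (0:ℝ) 1) :=
    fun t ht => (hHode t ht).continuousAt.continuousWithinAt
  have hgcont : ContinuousOn (fun s => sigd σ (Abar s (H s) + bbar s)) (Icc (0:ℝ) 1) :=
    hsig.continuous.comp_continuousOn ((hAcont.clm_apply hHcont).add hbcont)
  -- bounds
  obtain ⟨MA0, hMA0⟩ := hIcc.exists_bound_of_continuousOn hAcont
  obtain ⟨MH0, hMH0⟩ := hIcc.exists_bound_of_continuousOn hHcont
  set MA : ℝ := max MA0 0 with hMAdef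
  set MH : ℝ := max MH0 0 with hMHdef
  have hMA : ∀ t ∈ Icc (0:ℝ) 1, ‖Abar t‖ ≤ MA := fun t ht => (hMA0 t ht).trans (le_max_left _ _)
  have hMH : ∀ t ∈ Icc (0:ℝ) 1, ‖H t‖ ≤ MH := fun t ht => (hMH0 t ht).trans (le_max_left _ _)
  have hMAnn : 0 ≤ MA := le_max_right _ _
  have hMHnn : 0 ≤ MH := le_max_right _ _
  set a : ℝ := (K:ℝ) * MA + 1 with hadef
  set C : ℝ := (K:ℝ) * (MH + MA + 1) with hCdef
  have ha1 : 1 ≤ a := by nlinarith [K.coe_nonneg]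
  have ha0 : 0 < a := lt_of_lt_of_le one_pos ha1
  have hCnn : 0 ≤ C := by nlinarith [K.coe_nonneg]
  have hexp1 : 1 ≤ Real.exp a := by
    rw [← Real.exp_zero]; exact Real.exp_le_exp.2 (le_of_lt ha0)
  have hane : a ≠ 0 := ne_of_gt ha0
  clear_value MA MH a C
  rw [Metric.tendsto_atTop]
  intro ε hε
  -- choice of δ
  obtain ⟨D, hDdef⟩ : ∃ D : ℝ, D = 1 + (C/a) * (Real.exp a - 1) := ⟨_, rfl⟩
  have hD1 : 1 ≤ D := by
    have h9 : 0 ≤ (C/a) * (Real.exp a - 1) :=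
      mul_nonneg (div_nonneg hCnn ha0.le) (by linarith)
    rw [hDdef]; linarith
  obtain ⟨δ, hδdef⟩ : ∃ δ : ℝ, δ = ε / (2 * D) := ⟨_, rfl⟩
  have hδ0 : 0 < δ := hδdef ▸ div_pos hε (by linarith)
  have hδε : δ + (C * δ / a) * (Real.exp a - 1) < ε := by
    have h1 : δ + (C * δ / a) * (Real.exp a - 1) = δ * D := by rw [hDdef]; ring
    have h2 : δ * D = ε / 2 := by
      rw [hδdef]; field_simp
    rw [h1, h2]; linarith
  -- uniform continuity moduli
  obtain ⟨ηA, hηA0, hηA⟩ := Metric.uniformContinuousOn_iff.mp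
    (hIcc.uniformContinuousOn_of_continuous hAcont) δ hδ0
  obtain ⟨ηb, hηb0, hηb⟩ := Metric.uniformContinuousOn_iff.mp
    (hIcc.uniformContinuousOn_of_continuous hbcont) δ hδ0
  obtain ⟨ηH, hηH0, hηH⟩ := Metric.uniformContinuousOn_iff.mp
    (hIcc.uniformContinuousOn_of_continuous hHcont) δ hδ0
  set η : ℝ := min ηA (min ηb ηH) with hηdef
  have hη0 : 0 < η := lt_min hηA0 (lt_min hηb0 hηH0)
  refine ⟨⌈1/η⌉₊ + 1, fun L hL => ?_⟩
  have hL1 : 1 ≤ L := le_trans (Nat.le_add_left 1 _) hL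
  have hLpos : (0:ℝ) < L := by exact_mod_cast Nat.lt_of_lt_of_le Nat.zero_lt_one hL1
  have hηL : 1 / (L:ℝ) < η := by
    have h1 : 1/η < (L:ℝ) := by
      have : (⌈1/η⌉₊:ℝ) < L := by
        exact_mod_cast Nat.lt_of_lt_of_le (Nat.lt_succ_self _) hL
      exact lt_of_le_of_lt (Nat.le_ceil _) this
    rw [div_lt_iff₀ hLpos]
    rw [div_lt_iff₀ hη0] at h1
    linarith [mul_comm η (L:ℝ)]
  -- key induction
  have key : ∀ k, k ≤ L → ‖H ((k:ℝ)/(L:ℝ)) - h L k‖ ≤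
      (C * δ / a) * ((1 + a/(L:ℝ))^k - 1) := by
    intro k
    induction k with
    | zero =>
      intro _
      simp [hh0, hH0]
    | succ k ih =>
      intro hk1
      have hkL : k < L := hk1
      have ihk := ih (le_of_lt hkL)
      set t₀ : ℝ := (k:ℝ)/(L:ℝ) with ht₀def
      set t₁ : ℝ := ((k:ℝ)+1)/(L:ℝ) with ht₁def
      have hcast : (((k+1:ℕ)):ℝ)/(L:ℝ) = t₁ := by push_cast; rfl
      have ht₀mem : t₀ ∈ Icc (0:ℝ) 1 := by
        constructor
        · positivity
        · rw [div_le_one hLpos]; exact_mod_cast le_of_lt hkL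
      have ht₁mem : t₁ ∈ Icc (0:ℝ) 1 := by
        constructor
        · positivity
        · rw [div_le_one hLpos]; exact_mod_cast hk1
      have ht01 : t₀ ≤ t₁ := by
        rw [ht₀def, ht₁def]; gcongr; linarith
      have hsub : Icc t₀ t₁ ⊆ Icc (0:ℝ) 1 := Icc_subset_Icc ht₀mem.1 ht₁mem.2
      have hdiff : t₁ - t₀ = ((L:ℝ))⁻¹ := by
        rw [ht₀def, ht₁def]; field_simp; ring
      -- FTC
      have huIcc01 : uIcc t₀ t₁ = Icc t₀ t₁ := uIcc_of_le ht01
      have hgint : IntervalIntegrable (fun s => sigd σ (Abar s (H s) + bbar s)) volume t₀ t₁ :=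
        (hgcont.mono (by rw [huIcc01]; exact hsub)).intervalIntegrable
      have hftc : ∫ s in t₀..t₁, sigd σ (Abar s (H s) + bbar s) = H t₁ - H t₀ :=
        intervalIntegral.integral_eq_sub_of_hasDerivAt
          (fun s hs => hHode s (hsub (huIcc01 ▸ hs))) hgint
      set g₀ : EuclideanSpace ℝ (Fin d) := sigd σ (Abar t₀ (h L k) + bbar t₀) with hg₀def
      have hstep : H t₁ - h L (k+1) =
          (H t₀ - h L k) + ∫ s in t₀..t₁, (sigd σ (Abar s (H s) + bbar s) - g₀) := by
        rw [hhrec L k hkL, intervalIntegral.integral_sub hgint intervalIntegrable_const,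
          intervalIntegral.integral_const, hdiff, hftc]
        abel
      -- bound on the integrand
      have hibound : ∀ s ∈ Set.uIoc t₀ t₁,
          ‖sigd σ (Abar s (H s) + bbar s) - g₀‖ ≤
            (K:ℝ) * MA * ‖H t₀ - h L k‖ + C * δ := by
        intro s hs
        rw [Set.uIoc_of_le ht01] at hs
        have hsmem : s ∈ Icc (0:ℝ) 1 := hsub ⟨le_of_lt hs.1, hs.2⟩
        have hdist : dist s t₀ < η := by
          rw [Real.dist_eq, abs_of_nonneg (by linarith [hs.1] : (0:ℝ) ≤ s - t₀)]
          have : s - t₀ ≤ t₁ - t₀ := by linarith [hs.2]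
          rw [hdiff] at this
          calc s - t₀ ≤ ((L:ℝ))⁻¹ := this
            _ = 1 / (L:ℝ) := (one_div _).symm
            _ < η := hηL
        have hdA : ‖Abar s - Abar t₀‖ ≤ δ := by
          have := hηA s hsmem t₀ ht₀mem (lt_of_lt_of_le hdist (min_le_left _ _))
          rw [dist_eq_norm] at this; linarith
        have hdb : ‖bbar s - bbar t₀‖ ≤ δ := by
          have := hηb s hsmem t₀ ht₀mem
            (lt_of_lt_of_le hdist ((min_le_right _ _).trans (min_le_left _ _)))
          rw [dist_eq_norm] at this; linarith
        have hdH : ‖H s - H t₀‖ ≤ δ := by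
          have := hηH s hsmem t₀ ht₀mem
            (lt_of_lt_of_le hdist ((min_le_right _ _).trans (min_le_right _ _)))
          rw [dist_eq_norm] at this; linarith
        have h0 : ‖sigd σ (Abar s (H s) + bbar s) - g₀‖ ≤
            (K:ℝ) * ‖(Abar s (H s) + bbar s) - (Abar t₀ (h L k) + bbar t₀)‖ :=
          hsignorm _ _
        have hsplit : (Abar s (H s) + bbar s) - (Abar t₀ (h L k) + bbar t₀) =
            ((Abar s - Abar t₀) (H s)) + (Abar t₀ (H s - H t₀)) +
            (Abar t₀ (H t₀ - h L k)) + (bbar s - bbar t₀) := by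
          simp only [ContinuousLinearMap.sub_apply, map_sub]
          abel
        have h1 : ‖(Abar s - Abar t₀) (H s)‖ ≤ δ * MH :=
          le_trans ((Abar s - Abar t₀).le_opNorm (H s))
            (mul_le_mul hdA (hMH s hsmem) (norm_nonneg _) (by linarith))
        have h2 : ‖Abar t₀ (H s - H t₀)‖ ≤ MA * δ :=
          le_trans ((Abar t₀).le_opNorm _)
            (mul_le_mul (hMA t₀ ht₀mem) hdH (norm_nonneg _) hMAnn)
        have h3 : ‖Abar t₀ (H t₀ - h L k)‖ ≤ MA * ‖H t₀ - h L k‖ :=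
          le_trans ((Abar t₀).le_opNorm _)
            (mul_le_mul_of_nonneg_right (hMA t₀ ht₀mem) (norm_nonneg _))
        have h4 : ‖(Abar s (H s) + bbar s) - (Abar t₀ (h L k) + bbar t₀)‖ ≤
            δ * MH + MA * δ + MA * ‖H t₀ - h L k‖ + δ := by
          rw [hsplit]
          calc ‖((Abar s - Abar t₀) (H s)) + (Abar t₀ (H s - H t₀)) +
              (Abar t₀ (H t₀ - h L k)) + (bbar s - bbar t₀)‖
              ≤ ‖((Abar s - Abar t₀) (H s)) + (Abar t₀ (H s - H t₀)) +
                (Abar t₀ (H t₀ - h L k))‖ + ‖bbar s - bbar t₀‖ := norm_add_le _ _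
            _ ≤ ‖((Abar s - Abar t₀) (H s)) + (Abar t₀ (H s - H t₀))‖ +
                ‖Abar t₀ (H t₀ - h L k)‖ + ‖bbar s - bbar t₀‖ := by
                  gcongr; exact norm_add_le _ _
            _ ≤ ‖(Abar s - Abar t₀) (H s)‖ + ‖Abar t₀ (H s - H t₀)‖ +
                ‖Abar t₀ (H t₀ - h L k)‖ + ‖bbar s - bbar t₀‖ := by
                  gcongr; exact norm_add_le _ _
            _ ≤ δ * MH + MA * δ + MA * ‖H t₀ - h L k‖ + δ := by
                  gcongr
        calc ‖sigd σ (Abar s (H s) + bbar s) - g₀‖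
            ≤ (K:ℝ) * (δ * MH + MA * δ + MA * ‖H t₀ - h L k‖ + δ) :=
              h0.trans (mul_le_mul_of_nonneg_left h4 K.coe_nonneg)
          _ = (K:ℝ) * MA * ‖H t₀ - h L k‖ + C * δ := by rw [hCdef]; ring
      have hintnorm : ‖∫ s in t₀..t₁, (sigd σ (Abar s (H s) + bbar s) - g₀)‖ ≤
          ((K:ℝ) * MA * ‖H t₀ - h L k‖ + C * δ) * ((L:ℝ))⁻¹ := by
        have := intervalIntegral.norm_integral_le_of_norm_le_const hibound
        rwa [show |t₁ - t₀| = ((L:ℝ))⁻¹ by rw [hdiff, abs_of_nonneg (by positivity)]] at this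
      -- combine
      have hek : ‖H t₁ - h L (k+1)‖ ≤
          ‖H t₀ - h L k‖ + ((K:ℝ) * MA * ‖H t₀ - h L k‖ + C * δ) * ((L:ℝ))⁻¹ := by
        rw [hstep]
        exact le_trans (norm_add_le _ _) (by gcongr)
      rw [hcast]
      have hBrec : (C * δ / a) * ((1 + a/(L:ℝ))^(k+1) - 1) =
          (1 + a/(L:ℝ)) * ((C * δ / a) * ((1 + a/(L:ℝ))^k - 1)) + C * δ * ((L:ℝ))⁻¹ := by
        have hLne : (L:ℝ) ≠ 0 := hLpos.ne'
        have hx : C * δ / a * (a / (L:ℝ)) = C * δ * ((L:ℝ))⁻¹ := by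
          rw [div_mul_div_comm, mul_comm (C * δ) a, mul_div_mul_left _ _ hane, div_eq_mul_inv]
        linear_combination hx
      rw [hBrec]
      have henonneg : (0:ℝ) ≤ ‖H t₀ - h L k‖ := norm_nonneg _
      have hKMA : (K:ℝ) * MA ≤ a := by rw [hadef]; linarith
      have hinvL : (0:ℝ) ≤ ((L:ℝ))⁻¹ := by positivity
      have h5 : ‖H t₀ - h L k‖ + ((K:ℝ) * MA * ‖H t₀ - h L k‖ + C * δ) * ((L:ℝ))⁻¹ ≤
          (1 + a/(L:ℝ)) * ‖H t₀ - h L k‖ + C * δ * ((L:ℝ))⁻¹ := by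
        have : (K:ℝ) * MA * ‖H t₀ - h L k‖ * ((L:ℝ))⁻¹ ≤ a * ‖H t₀ - h L k‖ * ((L:ℝ))⁻¹ := by
          gcongr
        have hrw : a/(L:ℝ) * ‖H t₀ - h L k‖ = a * ‖H t₀ - h L k‖ * ((L:ℝ))⁻¹ := by ring
        nlinarith
      have h6 : (1 + a/(L:ℝ)) * ‖H t₀ - h L k‖ ≤
          (1 + a/(L:ℝ)) * ((C * δ / a) * ((1 + a/(L:ℝ))^k - 1)) := by
        apply mul_le_mul_of_nonneg_left ihk
        have h8 := div_pos ha0 hLpos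
        linarith
      linarith [hek]
  -- bound on (1 + a/L)^k
  have bpow : ∀ k, k ≤ L → (1 + a/(L:ℝ))^k ≤ Real.exp a := by
    intro k hk
    have h1 : 1 + a/(L:ℝ) ≤ Real.exp (a/(L:ℝ)) := by
      have := Real.add_one_le_exp (a/(L:ℝ)); linarith
    calc (1 + a/(L:ℝ))^k ≤ (Real.exp (a/(L:ℝ)))^k :=
          pow_le_pow_left₀ (by have h8 := div_pos ha0 hLpos; linarith) h1 k
      _ = Real.exp ((k:ℝ) * (a/(L:ℝ))) := by
          rw [← Real.exp_nat_mul]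
      _ ≤ Real.exp a := by
          apply Real.exp_le_exp.2
          rw [mul_div_assoc']
          rw [div_le_iff₀ hLpos]
          have : (k:ℝ) ≤ (L:ℝ) := by exact_mod_cast hk
          nlinarith
  -- pointwise bound
  have main : ∀ t ∈ Icc (0:ℝ) 1, ‖H t - h L ⌊(L:ℝ) * t⌋₊‖ ≤
      δ + (C * δ / a) * (Real.exp a - 1) := by
    intro t ht
    set k : ℕ := ⌊(L:ℝ) * t⌋₊ with hkdef
    have hkL : k ≤ L := by
      rw [hkdef]
      calc ⌊(L:ℝ) * t⌋₊ ≤ ⌊(L:ℝ)⌋₊ := Nat.floor_le_floor (by nlinarith [ht.2])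
        _ = L := Nat.floor_natCast L
    have hkt : (k:ℝ)/(L:ℝ) ≤ t := by
      rw [div_le_iff₀ hLpos]
      have := Nat.floor_le (by nlinarith [ht.1] : (0:ℝ) ≤ (L:ℝ) * t)
      linarith [mul_comm t (L:ℝ)]
    have htk : t - (k:ℝ)/(L:ℝ) < 1/(L:ℝ) := by
      have := Nat.lt_floor_add_one ((L:ℝ) * t)
      rw [sub_lt_iff_lt_add, ← add_div, lt_div_iff₀ hLpos]
      linarith [mul_comm t (L:ℝ)]
    have htkmem : (k:ℝ)/(L:ℝ) ∈ Icc (0:ℝ) 1 := ⟨by positivity, le_trans hkt ht.2⟩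
    have hdist : dist t ((k:ℝ)/(L:ℝ)) < η := by
      rw [Real.dist_eq, abs_of_nonneg (by linarith)]
      linarith
    have hdH : ‖H t - H ((k:ℝ)/(L:ℝ))‖ ≤ δ := by
      have := hηH t ht ((k:ℝ)/(L:ℝ)) htkmem
        (lt_of_lt_of_le hdist ((min_le_right _ _).trans (min_le_right _ _)))
      rw [dist_eq_norm] at this; linarith
    have hkey := key k hkL
    have hb := bpow k hkL
    calc ‖H t - h L k‖ = ‖(H t - H ((k:ℝ)/(L:ℝ))) + (H ((k:ℝ)/(L:ℝ)) - h L k)‖ := by abel_nf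
      _ ≤ ‖H t - H ((k:ℝ)/(L:ℝ))‖ + ‖H ((k:ℝ)/(L:ℝ)) - h L k‖ := norm_add_le _ _
      _ ≤ δ + (C * δ / a) * (Real.exp a - 1) := by
          apply add_le_add hdH
          apply hkey.trans
          apply mul_le_mul_of_nonneg_left _ (div_nonneg (mul_nonneg hCnn hδ0.le) ha0.le)
          linarith
  -- conclude
  have hsup_le : (⨆ t : Icc (0:ℝ) 1, ‖H t - h L ⌊(L:ℝ) * (t:ℝ)⌋₊‖) ≤
      δ + (C * δ / a) * (Real.exp a - 1) := by
    refine Real.iSup_le ?_ ?_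
    · intro t
      exact main t.1 t.2
    · have : 0 ≤ (C * δ / a) * (Real.exp a - 1) := by
        apply mul_nonneg (div_nonneg (mul_nonneg hCnn hδ0.le) ha0.le); linarith
      linarith
  have hsup_nonneg : 0 ≤ ⨆ t : Icc (0:ℝ) 1, ‖H t - h L ⌊(L:ℝ) * (t:ℝ)⌋₊‖ :=
    Real.iSup_nonneg fun t => norm_nonneg _
  rw [Real.dist_eq, sub_zero, abs_of_nonneg hsup_nonneg]
  exact lt_of_le_of_lt hsup_le hδε
end

section
/- Linear ODE limit under Scaling regime 1 (Theorem 4.2, second case). Fix d ≥ 1, an input x ∈ ℝ^d, an activation σ ∈ C³(ℝ,ℝ) with σ(0)=0, σ'(0)=1, bounded third derivative, and σ Lipschitz. Let α, β > 0 with α + β = 1, and let Ā : [0,1] → ℝ^{d×d} and b̄ : [0,1] → ℝ^d be continuous functions for which there exist M > 0 and κ > 0 such that ‖Ā_t − Ā_s‖ + ‖b̄_t − b̄_s‖ ≤ M |t−s|^{κ/2} for all s,t ∈ [0,1]. For each L ∈ ℕ define the hidden states h_0^{(L)} = x and h_{k+1}^{(L)} = h_k^{(L)} + L^{-α} σ_d(L^{-β}(Ā_{k/L}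 h_k^{(L)} + b̄_{k/L})) for k = 0,…,L−1, and the piecewise-constant interpolation H̄_t^{(L)} = h_k^{(L)} for k/L ≤ t < (k+1)/L (with H̄_1^{(L)} = h_L^{(L)}). Let H : [0,1] → ℝ^d be the solution of the linear ODE dH_t/dt = Ā_t H_t + b̄_t with H_0 = x. Then lim_{L→∞} sup_{0 ≤ t ≤ 1} ‖H_t − H̄_t^{(L)}‖ = 0. -/
open MeasureTheory Filter Set

set_option maxHeartbeats 2000000

lemma euc_comp_le {d : ℕ} (z w : EuclideanSpace ℝ (Fin d)) (c : ℝ) (hc : 0 ≤ c)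
    (h : ∀ i, |z i| ≤ c * |w i|) : ‖z‖ ≤ c * ‖w‖ := by
  rw [EuclideanSpace.norm_eq, EuclideanSpace.norm_eq]
  have h2 : c * Real.sqrt (∑ i, ‖w i‖ ^ 2) = Real.sqrt (∑ i, (c * ‖w i‖) ^ 2) := by
    rw [← Real.sqrt_sq hc, ← Real.sqrt_mul (sq_nonneg c), Finset.mul_sum]
    rw [Real.sqrt_sq hc]
    congr 1; apply Finset.sum_congr rfl; intro i _; ring
  rw [h2]
  apply Real.sqrt_le_sqrt
  apply Finset.sum_le_sum
  intro i _
  have := h i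
  have h0 : (0:ℝ) ≤ c * |w i| := mul_nonneg hc (abs_nonneg _)
  calc ‖z i‖ ^ 2 = |z i| ^ 2 := by rw [Real.norm_eq_abs]
    _ ≤ (c * |w i|) ^ 2 := by nlinarith [abs_nonneg (z i)]
    _ = (c * ‖w i‖) ^ 2 := by rw [Real.norm_eq_abs]

lemma euc_coord_le {d : ℕ} (z : EuclideanSpace ℝ (Fin d)) (i : Fin d) : |z i| ≤ ‖z‖ := by
  rw [EuclideanSpace.norm_eq]
  have : |z i| = Real.sqrt (‖z i‖ ^ 2) := by
    rw [Real.sqrt_sq_eq_abs, Real.norm_eq_abs, abs_abs]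
  rw [this]
  apply Real.sqrt_le_sqrt
  exact Finset.single_le_sum (f := fun j => ‖z j‖ ^ 2) (fun j _ => sq_nonneg _) (Finset.mem_univ i)

lemma sigd_lip {d : ℕ} (σ : ℝ → ℝ) (hσ0 : σ 0 = 0) (K : NNReal) (hσLip : LipschitzWith K σ)
    (z : EuclideanSpace ℝ (Fin d)) : ‖sigd σ z‖ ≤ K * ‖z‖ := by
  apply euc_comp_le _ _ _ K.coe_nonneg
  intro i
  have := hσLip.dist_le_mul (z i) 0
  simpa [sigd, hσ0, Real.dist_eq] using this

lemma sigd_sub {d : ℕ} (σ : ℝ → ℝ) (C2 : ℝ) (hC2 : 0 ≤ C2)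
    (hsc : ∀ y : ℝ, |y| ≤ 1 → |σ y - y| ≤ C2 * y ^ 2)
    (z : EuclideanSpace ℝ (Fin d)) (hz : ‖z‖ ≤ 1) :
    ‖sigd σ z - z‖ ≤ C2 * ‖z‖ * ‖z‖ := by
  apply euc_comp_le _ _ _ (by positivity)
  intro i
  have hzi : |z i| ≤ ‖z‖ := euc_coord_le z i
  have h1 : |z i| ≤ 1 := hzi.trans hz
  have h2 : |σ (z i) - z i| ≤ C2 * (z i) ^ 2 := hsc _ h1
  have h3 : (sigd σ z - z) i = σ (z i) - z i := by simp [sigd]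
  rw [h3]
  calc |σ (z i) - z i| ≤ C2 * (z i) ^ 2 := h2
    _ = C2 * |z i| * |z i| := by rw [mul_assoc, abs_mul_abs_self, sq]
    _ ≤ C2 * ‖z‖ * |z i| :=
        mul_le_mul_of_nonneg_right (mul_le_mul_of_nonneg_left hzi hC2) (abs_nonneg (z i))

private lemma hstep_aux (f f' : ℝ → ℝ) (B : ℝ) (hf : ∀ s, HasDerivAt f (f' s) s)
    (y : ℝ) (hB : ∀ s ∈ uIcc (0:ℝ) y, |f' s| ≤ B) : |f y - f 0| ≤ B * |y| := by
  have := Convex.norm_image_sub_le_of_norm_hasDerivWithin_le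
    (f := f) (f' := f') (C := B) (s := uIcc (0:ℝ) y)
    (fun s hs => (hf s).hasDerivWithinAt) (fun s hs => by simpa using hB s hs)
    (convex_uIcc 0 y) left_mem_uIcc right_mem_uIcc
  simpa using this

private lemma mem_uIcc_abs {y s : ℝ} (hs : s ∈ uIcc (0:ℝ) y) : |s| ≤ |y| := by
  rw [uIcc, Set.mem_Icc] at hs
  have h1 : min 0 y ≤ s := hs.1
  have h2 : s ≤ max 0 y := hs.2
  have h3 : -|y| ≤ min 0 y := le_min (neg_nonpos.mpr (abs_nonneg y)) (neg_abs_le y)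
  have h4 : max 0 y ≤ |y| := max_le (abs_nonneg y) (le_abs_self y)
  rw [abs_le]; constructor <;> linarith

lemma sigma_approx (σ : ℝ → ℝ) (hσC3 : ContDiff ℝ 3 σ) (hσ0 : σ 0 = 0) (hσ'0 : deriv σ 0 = 1)
    (C3 : ℝ) (hσ3 : ∀ y : ℝ, |iteratedDeriv 3 σ y| ≤ C3) (y : ℝ) :
    |σ y - y| ≤ (|deriv (deriv σ) 0| + C3 * |y|) * y ^ 2 := by
  have hC3 : 0 ≤ C3 := le_trans (abs_nonneg _) (hσ3 0)
  have e3 : (3 : WithTop ℕ∞) = 2 + 1 := by norm_num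
  have h1 := contDiff_succ_iff_deriv.mp (e3 ▸ hσC3)
  have d1 : Differentiable ℝ σ := h1.1
  have e2 : (2 : WithTop ℕ∞) = 1 + 1 := by norm_num
  have h2 := contDiff_succ_iff_deriv.mp (e2 ▸ h1.2.2)
  have d2 : Differentiable ℝ (deriv σ) := h2.1
  have d3 : Differentiable ℝ (deriv (deriv σ)) := h2.2.2.differentiable (by norm_num)
  have hit : iteratedDeriv 3 σ = deriv (deriv (deriv σ)) := by
    rw [show (3:ℕ) = 2+1 from rfl, iteratedDeriv_succ, show (2:ℕ) = 1+1 from rfl,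
      iteratedDeriv_succ, iteratedDeriv_one]
  have h2b : ∀ s : ℝ, |deriv (deriv σ) s| ≤ |deriv (deriv σ) 0| + C3 * |s| := by
    intro s
    have := hstep_aux (deriv (deriv σ)) (deriv (deriv (deriv σ))) C3
      (fun u => (d3 u).hasDerivAt) s (fun u _ => by rw [← hit]; exact hσ3 u)
    have habs : |deriv (deriv σ) s| ≤ |deriv (deriv σ) s - deriv (deriv σ) 0|
        + |deriv (deriv σ) 0| := by
      have := abs_sub_abs_le_abs_sub (deriv (deriv σ) s) (deriv (deriv σ) 0)
      linarith [abs_nonneg (deriv (deriv σ) s - deriv (deriv σ) 0)]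
    linarith
  set B1 : ℝ := |deriv (deriv σ) 0| + C3 * |y| with hB1
  have hB1n : 0 ≤ B1 := by positivity
  have h1b : ∀ s ∈ uIcc (0:ℝ) y, |deriv σ s - 1| ≤ B1 * |y| := by
    intro s hs
    have hsy : |s| ≤ |y| := mem_uIcc_abs hs
    have := hstep_aux (deriv σ) (deriv (deriv σ)) B1 (fun u => (d2 u).hasDerivAt) s
      (fun u hu => by
        have huy : |u| ≤ |y| := le_trans (mem_uIcc_abs hu) hsy
        have := h2b u
        rw [hB1]
        nlinarith)
    rw [hσ'0] at this
    calc |deriv σ s - 1| ≤ B1 * |s| := this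
      _ ≤ B1 * |y| := by nlinarith
  have hfinal := hstep_aux (fun s => σ s - s) (fun s => deriv σ s - 1) (B1 * |y|)
    (fun s => (d1 s).hasDerivAt.sub (hasDerivAt_id s)) y h1b
  simp only [hσ0, sub_zero, sub_self] at hfinal
  calc |σ y - y| ≤ B1 * |y| * |y| := by simpa using hfinal
    _ = B1 * y ^ 2 := by rw [mul_assoc, abs_mul_abs_self, sq]

/-- **Linear ODE limit under Scaling regime 1 (Theorem 4.2, second case).**
Let `σ ∈ C³` with `σ(0) = 0`, `σ'(0) = 1`, bounded third derivative, `σ` Lipschitz.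
Let `α, β > 0` with `α + β = 1`, and let `Ā`, `b̄` be continuous and `κ/2`-Hölder on `[0,1]`.
Then the piecewise-constant interpolation of the hidden states
`h^{(L)}_{k+1} = h^{(L)}_k + L^{-α} σ_d(L^{-β}(Ā_{k/L} h^{(L)}_k + b̄_{k/L}))`, `h^{(L)}_0 = x`,
converges uniformly on `[0,1]` to the solution `H` of the linear ODE
`dH_t/dt = Ā_t H_t + b̄_t`, `H_0 = x`. -/
theorem linear_ode_limit_regime1
    (d : ℕ) (hd : 1 ≤ d) (x : EuclideanSpace ℝ (Fin d))
    -- activation function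
    (σ : ℝ → ℝ) (hσC3 : ContDiff ℝ 3 σ) (hσ0 : σ 0 = 0) (hσ'0 : deriv σ 0 = 1)
    (C3 : ℝ) (hσ3 : ∀ y : ℝ, |iteratedDeriv 3 σ y| ≤ C3)
    (K : NNReal) (hσLip : LipschitzWith K σ)
    -- scaling exponents
    (α β : ℝ) (hα : 0 < α) (hβ : 0 < β) (hαβ : α + β = 1)
    -- weights: Ā, b̄ continuous and κ/2-Hölder on [0,1]
    (Abar : ℝ → (EuclideanSpace ℝ (Fin d) →L[ℝ] EuclideanSpace ℝ (Fin d)))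
    (bbar : ℝ → EuclideanSpace ℝ (Fin d))
    (hAc : ContinuousOn Abar (Icc (0:ℝ) 1))
    (hbc : ContinuousOn bbar (Icc (0:ℝ) 1))
    (M κ : ℝ) (hM : 0 < M) (hκ : 0 < κ)
    (hHolder : ∀ s ∈ Icc (0:ℝ) 1, ∀ t ∈ Icc (0:ℝ) 1,
      ‖Abar t - Abar s‖ + ‖bbar t - bbar s‖ ≤ M * |t - s| ^ (κ/2))
    -- hidden states of the residual network of depth L
    (h : ℕ → ℕ → EuclideanSpace ℝ (Fin d))
    (hh0 : ∀ L : ℕ, h L 0 = x)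
    (hhrec : ∀ L : ℕ, ∀ k < L, h L (k+1) =
      h L k + ((L:ℝ) ^ (-α)) •
        sigd σ (((L:ℝ) ^ (-β)) • (Abar ((k:ℝ)/(L:ℝ)) (h L k) + bbar ((k:ℝ)/(L:ℝ)))))
    -- solution of the linear ODE
    (H : ℝ → EuclideanSpace ℝ (Fin d)) (hH0 : H 0 = x)
    (hHode : ∀ t ∈ Icc (0:ℝ) 1, HasDerivAt H (Abar t (H t) + bbar t) t) :
    Tendsto (fun L : ℕ => ⨆ t : Icc (0:ℝ) 1, ‖H t - h L ⌊(L:ℝ) * (t:ℝ)⌋₊‖)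
      atTop (nhds 0) := by
  haveI : Nonempty (Icc (0:ℝ) 1) := ⟨⟨0, by norm_num⟩⟩
  -- bounds on Abar, bbar, H over [0,1]
  obtain ⟨CA0, hCA0⟩ := isCompact_Icc.exists_bound_of_continuousOn hAc
  set CA : ℝ := max CA0 0 with hCAdef
  clear_value CA
  have hCA : ∀ t ∈ Icc (0:ℝ) 1, ‖Abar t‖ ≤ CA := fun t ht => by
    rw [hCAdef]; exact (hCA0 t ht).trans (le_max_left _ _)
  have hCAn : (0:ℝ) ≤ CA := by rw [hCAdef]; exact le_max_right _ _
  obtain ⟨Cb0, hCb0⟩ := isCompact_Icc.exists_bound_of_continuousOn hbc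
  set Cb : ℝ := max Cb0 0 with hCbdef
  clear_value Cb
  have hCb : ∀ t ∈ Icc (0:ℝ) 1, ‖bbar t‖ ≤ Cb := fun t ht => by
    rw [hCbdef]; exact (hCb0 t ht).trans (le_max_left _ _)
  have hCbn : (0:ℝ) ≤ Cb := by rw [hCbdef]; exact le_max_right _ _
  have hHcont : ContinuousOn H (Icc (0:ℝ) 1) :=
    fun t ht => (hHode t ht).continuousAt.continuousWithinAt
  obtain ⟨CH0, hCH0⟩ := isCompact_Icc.exists_bound_of_continuousOn hHcont
  set CH : ℝ := max CH0 0 with hCHdef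
  clear_value CH
  have hCH : ∀ t ∈ Icc (0:ℝ) 1, ‖H t‖ ≤ CH := fun t ht => by
    rw [hCHdef]; exact (hCH0 t ht).trans (le_max_left _ _)
  have hCHn : (0:ℝ) ≤ CH := by rw [hCHdef]; exact le_max_right _ _
  set CH' : ℝ := CA * CH + Cb with hCH'def
  clear_value CH'
  have hCH'n : (0:ℝ) ≤ CH' := by
    rw [hCH'def]; have := mul_nonneg hCAn hCHn; linarith
  have hHd : ∀ t ∈ Icc (0:ℝ) 1, ‖Abar t (H t) + bbar t‖ ≤ CH' := by
    intro t ht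
    rw [hCH'def]
    have h1 : ‖Abar t (H t)‖ ≤ CA * CH := by
      calc ‖Abar t (H t)‖ ≤ ‖Abar t‖ * ‖H t‖ := (Abar t).le_opNorm _
        _ ≤ CA * CH := mul_le_mul (hCA t ht) (hCH t ht) (norm_nonneg _) hCAn
    calc ‖Abar t (H t) + bbar t‖ ≤ ‖Abar t (H t)‖ + ‖bbar t‖ := norm_add_le _ _
      _ ≤ CA * CH + Cb := add_le_add h1 (hCb t ht)
  have hHlip : ∀ s ∈ Icc (0:ℝ) 1, ∀ t ∈ Icc (0:ℝ) 1, ‖H t - H s‖ ≤ CH' * |t - s| := by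
    intro s hs t ht
    have := (convex_Icc (0:ℝ) 1).norm_image_sub_le_of_norm_hasDerivWithin_le
      (f := H) (f' := fun u => Abar u (H u) + bbar u)
      (fun u hu => (hHode u hu).hasDerivWithinAt) (fun u hu => hHd u hu) hs ht
    simpa [Real.norm_eq_abs] using this
  -- scalar bound for σ
  have hC3n : (0:ℝ) ≤ C3 := le_trans (abs_nonneg _) (hσ3 0)
  set C2 : ℝ := |deriv (deriv σ) 0| + C3 with hC2def
  clear_value C2
  have hC2n : (0:ℝ) ≤ C2 := by rw [hC2def]; positivity
  have hsc : ∀ y : ℝ, |y| ≤ 1 → |σ y - y| ≤ C2 * y ^ 2 := by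
    intro y hy
    have h1 := sigma_approx σ hσC3 hσ0 hσ'0 C3 hσ3 y
    have h2 : (|deriv (deriv σ) 0| + C3 * |y|) * y ^ 2 ≤ C2 * y ^ 2 := by
      rw [hC2def]
      have := mul_le_mul_of_nonneg_right
        (mul_le_mul_of_nonneg_left hy hC3n) (sq_nonneg y)
      linarith
    linarith
  have hKn : (0:ℝ) ≤ K := K.coe_nonneg
  -- bound on the hidden states
  set c0 : ℝ := K * (CA + Cb) with hc0def
  clear_value c0
  have hc0n : (0:ℝ) ≤ c0 := by
    rw [hc0def]; have := mul_nonneg hKn (by linarith : (0:ℝ) ≤ CA + Cb); linarith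
  set B : ℝ := (‖x‖ + 1) * Real.exp c0 with hBdef
  clear_value B
  have hBn : (1:ℝ) ≤ B := by
    rw [hBdef]
    have h1 : (1:ℝ) ≤ ‖x‖ + 1 := by linarith [norm_nonneg x]
    have h2 : (1:ℝ) ≤ Real.exp c0 := Real.one_le_exp hc0n
    calc (1:ℝ) = 1 * 1 := by ring
      _ ≤ (‖x‖ + 1) * Real.exp c0 := mul_le_mul h1 h2 zero_le_one (by linarith)
  set D : ℝ := CA * B + Cb with hDdef
  clear_value D
  have hDn : (0:ℝ) ≤ D := by
    rw [hDdef]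
    have : (0:ℝ) ≤ CA * B := mul_nonneg hCAn (by linarith)
    linarith
  have hhb : ∀ L : ℕ, 1 ≤ L → ∀ k ≤ L, ‖h L k‖ ≤ B := by
    intro L hL1
    have hq0 : (0:ℝ) < (L:ℝ) := by exact_mod_cast hL1
    have hrpow : (L:ℝ) ^ (-α) * (L:ℝ) ^ (-β) = 1 / (L:ℝ) := by
      rw [← Real.rpow_add hq0, show -α + -β = -(1:ℝ) by linarith, Real.rpow_neg_one, one_div]
    have hstep : ∀ k ≤ L, ‖h L k‖ ≤ (‖x‖ + 1) * (1 + c0 / L) ^ k := by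
      intro k
      induction k with
      | zero =>
        intro _
        rw [hh0]
        have h1 : (‖x‖:ℝ) ≤ ‖x‖ + 1 := by linarith
        simpa using h1
      | succ k ih =>
        intro hk1
        have hklt : k < L := hk1
        have ihk := ih (le_of_lt hklt)
        have hsI : (k:ℝ)/(L:ℝ) ∈ Icc (0:ℝ) 1 := by
          rw [Set.mem_Icc]
          refine ⟨by positivity, ?_⟩
          rw [div_le_one hq0]; exact_mod_cast le_of_lt hklt
        have hu : ‖Abar ((k:ℝ)/(L:ℝ)) (h L k) + bbar ((k:ℝ)/(L:ℝ))‖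
            ≤ CA * ‖h L k‖ + Cb := by
          calc ‖Abar ((k:ℝ)/(L:ℝ)) (h L k) + bbar ((k:ℝ)/(L:ℝ))‖
              ≤ ‖Abar ((k:ℝ)/(L:ℝ)) (h L k)‖ + ‖bbar ((k:ℝ)/(L:ℝ))‖ := norm_add_le _ _
            _ ≤ CA * ‖h L k‖ + Cb := by
              refine add_le_add ?_ (hCb _ hsI)
              calc ‖Abar ((k:ℝ)/(L:ℝ)) (h L k)‖ ≤ ‖Abar ((k:ℝ)/(L:ℝ))‖ * ‖h L k‖ :=
                    (Abar _).le_opNorm _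
                _ ≤ CA * ‖h L k‖ := mul_le_mul_of_nonneg_right (hCA _ hsI) (norm_nonneg _)
        have hp : (0:ℝ) ≤ (L:ℝ) ^ (-α) := Real.rpow_nonneg hq0.le _
        have hp2 : (0:ℝ) ≤ (L:ℝ) ^ (-β) := Real.rpow_nonneg hq0.le _
        have hnsig : ‖((L:ℝ) ^ (-α)) • sigd σ (((L:ℝ) ^ (-β)) •
              (Abar ((k:ℝ)/(L:ℝ)) (h L k) + bbar ((k:ℝ)/(L:ℝ))))‖
            ≤ (1/(L:ℝ)) * (K * (CA * ‖h L k‖ + Cb)) := by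
          rw [norm_smul, Real.norm_eq_abs, abs_of_nonneg hp]
          have h1 := sigd_lip σ hσ0 K hσLip
            (((L:ℝ) ^ (-β)) • (Abar ((k:ℝ)/(L:ℝ)) (h L k) + bbar ((k:ℝ)/(L:ℝ))))
          have h2 : ‖((L:ℝ) ^ (-β)) • (Abar ((k:ℝ)/(L:ℝ)) (h L k) + bbar ((k:ℝ)/(L:ℝ)))‖
              = (L:ℝ) ^ (-β) * ‖Abar ((k:ℝ)/(L:ℝ)) (h L k) + bbar ((k:ℝ)/(L:ℝ))‖ := by
            rw [norm_smul, Real.norm_eq_abs, abs_of_nonneg hp2]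
          calc ((L:ℝ) ^ (-α)) * ‖sigd σ (((L:ℝ) ^ (-β)) •
                (Abar ((k:ℝ)/(L:ℝ)) (h L k) + bbar ((k:ℝ)/(L:ℝ))))‖
              ≤ ((L:ℝ) ^ (-α)) * (K * ((L:ℝ) ^ (-β) *
                ‖Abar ((k:ℝ)/(L:ℝ)) (h L k) + bbar ((k:ℝ)/(L:ℝ))‖)) := by
                apply mul_le_mul_of_nonneg_left _ hp
                rw [← h2]; exact h1
            _ = ((L:ℝ) ^ (-α) * (L:ℝ) ^ (-β)) *
                (K * ‖Abar ((k:ℝ)/(L:ℝ)) (h L k) + bbar ((k:ℝ)/(L:ℝ))‖) := by ring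
            _ = (1/(L:ℝ)) * (K * ‖Abar ((k:ℝ)/(L:ℝ)) (h L k) + bbar ((k:ℝ)/(L:ℝ))‖) := by
                rw [hrpow]
            _ ≤ (1/(L:ℝ)) * (K * (CA * ‖h L k‖ + Cb)) := by
                apply mul_le_mul_of_nonneg_left _ (by positivity)
                exact mul_le_mul_of_nonneg_left hu hKn
        have hn1 : ‖h L (k+1)‖ ≤ ‖h L k‖ + (1/(L:ℝ)) * (K * (CA * ‖h L k‖ + Cb)) := by
          rw [hhrec L k hklt]
          refine le_trans (norm_add_le _ _) ?_
          linarith [hnsig]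
        have h1L : (0:ℝ) < 1/(L:ℝ) := by positivity
        have hR1 : (1:ℝ) ≤ (‖x‖ + 1) * (1 + c0 / L) ^ k := by
          have h1 : (1:ℝ) ≤ (1 + c0 / L) ^ k := one_le_pow₀ (by linarith [div_nonneg hc0n (Nat.cast_nonneg L)])
          calc (1:ℝ) = 1 * 1 := by ring
            _ ≤ (‖x‖ + 1) * (1 + c0 / L) ^ k :=
              mul_le_mul (by linarith [norm_nonneg x]) h1 zero_le_one
                (by linarith [norm_nonneg x])
        calc ‖h L (k+1)‖ ≤ ‖h L k‖ + (1/(L:ℝ)) * (K * (CA * ‖h L k‖ + Cb)) := hn1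
          _ ≤ (‖x‖ + 1) * (1 + c0 / L) ^ (k+1) := by
            rw [pow_succ]
            have e1 : (‖x‖ + 1) * ((1 + c0 / L) ^ k * (1 + c0 / L))
                = (‖x‖ + 1) * (1 + c0 / L) ^ k
                  + ((‖x‖ + 1) * (1 + c0 / L) ^ k) * (((K:ℝ) * (CA + Cb)) / L) := by
              rw [hc0def]; ring
            rw [e1]
            have t1 : (1/(L:ℝ)) * ((K:ℝ) * (CA * ‖h L k‖ + Cb))
                ≤ ((‖x‖ + 1) * (1 + c0 / L) ^ k) * (((K:ℝ) * (CA + Cb)) / L) := by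
              rw [div_eq_mul_one_div ((K:ℝ) * (CA + Cb)) (L:ℝ)]
              have hkR : CA * ‖h L k‖ ≤ CA * ((‖x‖ + 1) * (1 + c0 / L) ^ k) :=
                mul_le_mul_of_nonneg_left ihk hCAn
              have hcbR : Cb ≤ Cb * ((‖x‖ + 1) * (1 + c0 / L) ^ k) := le_mul_of_one_le_right hCbn hR1
              have t2 : (K:ℝ) * (CA * ‖h L k‖ + Cb)
                  ≤ (K:ℝ) * ((CA + Cb) * ((‖x‖ + 1) * (1 + c0 / L) ^ k)) := by
                apply mul_le_mul_of_nonneg_left _ hKn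
                have e2 : (CA + Cb) * ((‖x‖ + 1) * (1 + c0 / L) ^ k)
                    = CA * ((‖x‖ + 1) * (1 + c0 / L) ^ k)
                      + Cb * ((‖x‖ + 1) * (1 + c0 / L) ^ k) := by ring
                rw [e2]
                exact add_le_add hkR hcbR
              calc (1/(L:ℝ)) * ((K:ℝ) * (CA * ‖h L k‖ + Cb))
                  ≤ (1/(L:ℝ)) * ((K:ℝ) * ((CA + Cb) * ((‖x‖ + 1) * (1 + c0 / L) ^ k))) :=
                    mul_le_mul_of_nonneg_left t2 h1L.le
                _ = ((‖x‖ + 1) * (1 + c0 / L) ^ k) * ((K:ℝ) * (CA + Cb) * (1/(L:ℝ))) := by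
                    ring
            linarith
    intro k hk
    have h1 := hstep k hk
    have h2 : (1 + c0 / L) ^ k ≤ Real.exp c0 := by
      have ha : (1 + c0 / L) ≤ Real.exp (c0 / L) := by
        have := Real.add_one_le_exp (c0 / L); linarith
      have hb : (1 + c0 / L) ^ k ≤ Real.exp (c0 / L) ^ k :=
        pow_le_pow_left₀ (by positivity) ha k
      have hc : Real.exp (c0 / L) ^ k = Real.exp ((k:ℝ) * (c0 / L)) :=
        (Real.exp_nat_mul _ k).symm
      have hd' : (k:ℝ) * (c0 / L) ≤ c0 := by
        have hkL : (k:ℝ) ≤ (L:ℝ) := by exact_mod_cast hk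
        rw [mul_div_assoc', div_le_iff₀ hq0]
        have := mul_le_mul_of_nonneg_left hkL hc0n
        linarith
      calc (1 + c0 / L) ^ k ≤ Real.exp (c0 / L) ^ k := hb
        _ = Real.exp ((k:ℝ) * (c0 / L)) := hc
        _ ≤ Real.exp c0 := Real.exp_le_exp.2 hd'
    rw [hBdef]
    calc ‖h L k‖ ≤ (‖x‖ + 1) * (1 + c0 / L) ^ k := h1
      _ ≤ (‖x‖ + 1) * Real.exp c0 := by
        apply mul_le_mul_of_nonneg_left h2 (by positivity)
  -- the per-depth error bound
  set ε : ℕ → ℝ := fun L => M * (CH + 1) * (1/(L:ℝ)) ^ (κ/2) + CA * CH' * (1/(L:ℝ))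
      + C2 * D ^ 2 * ((L:ℝ)) ^ (-β) with hεdef
  clear_value ε
  have hεn : ∀ L : ℕ, 0 ≤ ε L := by
    intro L
    have h1 : (0:ℝ) ≤ (1/(L:ℝ)) ^ (κ/2) := Real.rpow_nonneg (by positivity) _
    have h2 : (0:ℝ) ≤ ((L:ℝ)) ^ (-β) := Real.rpow_nonneg (Nat.cast_nonneg L) _
    have h3 : (0:ℝ) ≤ 1/(L:ℝ) := by positivity
    have hM' := hM
    have e1 : ε L = M * (CH + 1) * (1/(L:ℝ)) ^ (κ/2) + CA * CH' * (1/(L:ℝ))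
        + C2 * D ^ 2 * ((L:ℝ)) ^ (-β) := by rw [hεdef]
    rw [e1]
    have : (0:ℝ) ≤ M * (CH + 1) := mul_nonneg hM'.le (by linarith)
    have : (0:ℝ) ≤ CA * CH' := mul_nonneg hCAn hCH'n
    have : (0:ℝ) ≤ C2 * D ^ 2 := mul_nonneg hC2n (sq_nonneg D)
    positivity
  set bnd : ℕ → ℝ := fun L => CH' * (1/(L:ℝ)) + Real.exp CA * ε L with hbnddef
  clear_value bnd
  apply squeeze_zero' (g := bnd)
  · exact Eventually.of_forall fun L => Real.iSup_nonneg fun t => norm_nonneg _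
  · -- the main estimate, for L large
    have hev : ∀ᶠ L : ℕ in atTop, 1 ≤ L ∧ D ≤ (L:ℝ) ^ β := by
      have h1 : Tendsto (fun L : ℕ => ((L:ℝ)) ^ β) atTop atTop :=
        (tendsto_rpow_atTop hβ).comp tendsto_natCast_atTop_atTop
      exact (eventually_ge_atTop 1).and (h1.eventually_ge_atTop D)
    filter_upwards [hev] with L hLLD
    obtain ⟨hL1, hLD⟩ := hLLD
    have hq0 : (0:ℝ) < (L:ℝ) := by exact_mod_cast hL1
    have hq1 : (1:ℝ) ≤ (L:ℝ) := by exact_mod_cast hL1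
    have hrpow : (L:ℝ) ^ (-α) * (L:ℝ) ^ (-β) = 1 / (L:ℝ) := by
      rw [← Real.rpow_add hq0, show -α + -β = -(1:ℝ) by linarith, Real.rpow_neg_one, one_div]
    have hpα : (0:ℝ) ≤ (L:ℝ) ^ (-α) := Real.rpow_nonneg hq0.le _
    have hpβ : (0:ℝ) ≤ (L:ℝ) ^ (-β) := Real.rpow_nonneg hq0.le _
    have hβinv : (L:ℝ) ^ (-β) * (L:ℝ) ^ β = 1 := by
      rw [← Real.rpow_add hq0]; simp
    have hεL : ε L = M * (CH + 1) * (1/(L:ℝ)) ^ (κ/2) + CA * CH' * (1/(L:ℝ))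
        + C2 * D ^ 2 * ((L:ℝ)) ^ (-β) := by rw [hεdef]
    -- the one-step recursion for the error
    have key : ∀ k < L, ‖H (((k:ℝ)+1)/(L:ℝ)) - h L (k+1)‖
        ≤ (1 + CA/(L:ℝ)) * ‖H ((k:ℝ)/(L:ℝ)) - h L k‖ + (1/(L:ℝ)) * ε L := by
      intro k hklt
      have hkL : (k:ℝ) < (L:ℝ) := by exact_mod_cast hklt
      have hk1L : (k:ℝ) + 1 ≤ (L:ℝ) := by exact_mod_cast hklt
      set s : ℝ := (k:ℝ) / (L:ℝ) with hsdef
      set t' : ℝ := ((k:ℝ)+1) / (L:ℝ) with ht'def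
      have hsI : s ∈ Icc (0:ℝ) 1 := by
        rw [hsdef, Set.mem_Icc]
        exact ⟨by positivity, by rw [div_le_one hq0]; linarith⟩
      have ht'I : t' ∈ Icc (0:ℝ) 1 := by
        rw [ht'def, Set.mem_Icc]
        exact ⟨by positivity, by rw [div_le_one hq0]; linarith⟩
      have hts : t' - s = 1/(L:ℝ) := by rw [ht'def, hsdef]; field_simp; ring
      set u := Abar s (h L k) + bbar s with hudef
      set z := ((L:ℝ) ^ (-β)) • u with hzdef
      set v := Abar s (H s) + bbar s with hvdef
      have hu : ‖u‖ ≤ D := by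
        have hhk : ‖h L k‖ ≤ B := hhb L hL1 k (le_of_lt hklt)
        rw [hudef, hDdef]
        calc ‖Abar s (h L k) + bbar s‖ ≤ ‖Abar s (h L k)‖ + ‖bbar s‖ := norm_add_le _ _
          _ ≤ CA * B + Cb := by
            refine add_le_add ?_ (hCb s hsI)
            calc ‖Abar s (h L k)‖ ≤ ‖Abar s‖ * ‖h L k‖ := (Abar s).le_opNorm _
              _ ≤ CA * B := mul_le_mul (hCA s hsI) hhk (norm_nonneg _) hCAn
      have hznorm : ‖z‖ ≤ (L:ℝ) ^ (-β) * D := by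
        rw [hzdef, norm_smul, Real.norm_eq_abs, abs_of_nonneg hpβ]
        exact mul_le_mul_of_nonneg_left hu hpβ
      have hz1 : ‖z‖ ≤ 1 := by
        refine hznorm.trans ?_
        calc (L:ℝ) ^ (-β) * D ≤ (L:ℝ) ^ (-β) * (L:ℝ) ^ β :=
              mul_le_mul_of_nonneg_left hLD hpβ
          _ = 1 := hβinv
      have hrec' : h L (k+1) = h L k + ((L:ℝ) ^ (-α)) • sigd σ z := hhrec L k hklt
      have hsmul : ((L:ℝ) ^ (-α)) • z = (1/(L:ℝ)) • u := by
        rw [hzdef, smul_smul, hrpow]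
      have halg : H t' - h L (k+1)
          = ((H t' - t' • v) - (H s - s • v))
            + (1/(L:ℝ)) • (Abar s (H s - h L k))
            + (-((L:ℝ) ^ (-α))) • (sigd σ z - z)
            + (H s - h L k) := by
        have e1 : (-((L:ℝ) ^ (-α))) • (sigd σ z - z)
            = -(((L:ℝ) ^ (-α)) • sigd σ z) + (1/(L:ℝ)) • u := by
          rw [neg_smul, smul_sub, hsmul]; abel
        rw [hrec', e1, map_sub, hudef, hvdef, ht'def, hsdef]
        module
      -- bound for the first term T1 via the mean value inequality
      have hkey1 : ‖(H t' - t' • v) - (H s - s • v)‖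
          ≤ (M * (CH + 1) * (1/(L:ℝ)) ^ (κ/2) + CA * CH' * (1/(L:ℝ))) * (1/(L:ℝ)) := by
        have hsub : Icc s t' ⊆ Icc (0:ℝ) 1 := fun r hr =>
          ⟨le_trans hsI.1 hr.1, le_trans hr.2 ht'I.2⟩
        have hder : ∀ r ∈ Icc s t', HasDerivWithinAt (fun r => H r - r • v)
            ((Abar r (H r) + bbar r) - v) (Icc s t') r := by
          intro r hr
          have h1 : HasDerivAt (fun r : ℝ => r • v) v r := by
            simpa using (hasDerivAt_id r).smul_const v
          exact ((hHode r (hsub hr)).sub h1).hasDerivWithinAt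
        have hbound : ∀ r ∈ Icc s t', ‖(Abar r (H r) + bbar r) - v‖
            ≤ M * (CH + 1) * (1/(L:ℝ)) ^ (κ/2) + CA * CH' * (1/(L:ℝ)) := by
          intro r hr
          have hrI : r ∈ Icc (0:ℝ) 1 := hsub hr
          have hrs0 : 0 ≤ r - s := sub_nonneg.2 hr.1
          have hrs : |r - s| ≤ 1/(L:ℝ) := by
            rw [abs_of_nonneg hrs0]
            have := hr.2
            linarith [hts]
          have hdec : (Abar r (H r) + bbar r) - v
              = (Abar r - Abar s) (H r) + Abar s (H r - H s) + (bbar r - bbar s) := by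
            rw [hvdef]
            simp only [ContinuousLinearMap.sub_apply, map_sub]
            abel
          rw [hdec]
          have n1 : ‖(Abar r - Abar s) (H r)‖ ≤ ‖Abar r - Abar s‖ * CH :=
            le_trans ((Abar r - Abar s).le_opNorm _)
              (mul_le_mul_of_nonneg_left (hCH r hrI) (norm_nonneg _))
          have n2 : ‖Abar s (H r - H s)‖ ≤ CA * (CH' * |r - s|) :=
            le_trans ((Abar s).le_opNorm _)
              (mul_le_mul (hCA s hsI) (hHlip s hsI r hrI) (norm_nonneg _) hCAn)
          have n3 := hHolder s hsI r hrI
          have n4 : |r - s| ^ (κ/2) ≤ (1/(L:ℝ)) ^ (κ/2) :=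
            Real.rpow_le_rpow (abs_nonneg _) hrs (by positivity)
          have hA0 : (0:ℝ) ≤ ‖Abar r - Abar s‖ := norm_nonneg _
          have hb0 : (0:ℝ) ≤ ‖bbar r - bbar s‖ := norm_nonneg _
          have n5a : ‖Abar r - Abar s‖ * CH + ‖bbar r - bbar s‖
              ≤ (‖Abar r - Abar s‖ + ‖bbar r - bbar s‖) * (CH + 1) := by
            linarith [mul_nonneg hb0 hCHn, mul_nonneg hA0 hCHn]
          have n5b : (‖Abar r - Abar s‖ + ‖bbar r - bbar s‖) * (CH + 1)
              ≤ (M * |r - s| ^ (κ/2)) * (CH + 1) :=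
            mul_le_mul_of_nonneg_right n3 (by linarith)
          have n5c : (M * |r - s| ^ (κ/2)) * (CH + 1)
              ≤ (M * (1/(L:ℝ)) ^ (κ/2)) * (CH + 1) :=
            mul_le_mul_of_nonneg_right (mul_le_mul_of_nonneg_left n4 hM.le) (by linarith)
          have n6 : CA * (CH' * |r - s|) ≤ CA * CH' * (1/(L:ℝ)) := by
            rw [← mul_assoc]
            exact mul_le_mul_of_nonneg_left hrs (mul_nonneg hCAn hCH'n)
          have tri : ‖(Abar r - Abar s) (H r) + Abar s (H r - H s) + (bbar r - bbar s)‖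
              ≤ ‖(Abar r - Abar s) (H r)‖ + ‖Abar s (H r - H s)‖ + ‖bbar r - bbar s‖ := by
            calc ‖(Abar r - Abar s) (H r) + Abar s (H r - H s) + (bbar r - bbar s)‖
                ≤ ‖(Abar r - Abar s) (H r) + Abar s (H r - H s)‖ + ‖bbar r - bbar s‖ :=
                  norm_add_le _ _
              _ ≤ _ := by linarith [norm_add_le ((Abar r - Abar s) (H r)) (Abar s (H r - H s))]
          have : (M * (1/(L:ℝ)) ^ (κ/2)) * (CH + 1) = M * (CH + 1) * (1/(L:ℝ)) ^ (κ/2) := by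
            ring
          linarith [n1, n2, n5a, n5b, n5c, n6, tri, this]
        have hss : s ≤ t' := by
          have hL' : (0:ℝ) < 1/(L:ℝ) := by positivity
          linarith [hts]
        have hmean := (convex_Icc s t').norm_image_sub_le_of_norm_hasDerivWithin_le
          hder hbound (left_mem_Icc.2 hss) (right_mem_Icc.2 hss)
        have : ‖t' - s‖ = 1/(L:ℝ) := by
          rw [Real.norm_eq_abs, hts, abs_of_nonneg (by positivity)]
        rw [this] at hmean
        exact hmean
      have hkey2 : ‖(1/(L:ℝ)) • (Abar s (H s - h L k))‖
          ≤ (1/(L:ℝ)) * (CA * ‖H s - h L k‖) := by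
        rw [norm_smul, Real.norm_eq_abs, abs_of_nonneg (by positivity : (0:ℝ) ≤ 1/(L:ℝ))]
        apply mul_le_mul_of_nonneg_left _ (by positivity)
        exact le_trans ((Abar s).le_opNorm _)
          (mul_le_mul_of_nonneg_right (hCA s hsI) (norm_nonneg _))
      have hkey3 : ‖(-((L:ℝ) ^ (-α))) • (sigd σ z - z)‖
          ≤ (1/(L:ℝ)) * (C2 * D ^ 2 * (L:ℝ) ^ (-β)) := by
        rw [norm_smul, Real.norm_eq_abs, abs_neg, abs_of_nonneg hpα]
        have h1 : ‖sigd σ z - z‖ ≤ C2 * ‖z‖ * ‖z‖ := sigd_sub σ C2 hC2n hsc z hz1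
        have h2 : C2 * ‖z‖ * ‖z‖ ≤ C2 * ((L:ℝ) ^ (-β) * D) * ((L:ℝ) ^ (-β) * D) := by
          have m1 : ‖z‖ * ‖z‖ ≤ ((L:ℝ) ^ (-β) * D) * ((L:ℝ) ^ (-β) * D) :=
            mul_le_mul hznorm hznorm (norm_nonneg z) (mul_nonneg hpβ hDn)
          calc C2 * ‖z‖ * ‖z‖ = C2 * (‖z‖ * ‖z‖) := by ring
            _ ≤ C2 * (((L:ℝ) ^ (-β) * D) * ((L:ℝ) ^ (-β) * D)) :=
              mul_le_mul_of_nonneg_left m1 hC2n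
            _ = C2 * ((L:ℝ) ^ (-β) * D) * ((L:ℝ) ^ (-β) * D) := by ring
        calc (L:ℝ) ^ (-α) * ‖sigd σ z - z‖
            ≤ (L:ℝ) ^ (-α) * (C2 * ((L:ℝ) ^ (-β) * D) * ((L:ℝ) ^ (-β) * D)) :=
              mul_le_mul_of_nonneg_left (h1.trans h2) hpα
          _ = ((L:ℝ) ^ (-α) * (L:ℝ) ^ (-β)) * (C2 * D ^ 2 * (L:ℝ) ^ (-β)) := by ring
          _ = (1/(L:ℝ)) * (C2 * D ^ 2 * (L:ℝ) ^ (-β)) := by rw [hrpow]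
      calc ‖H t' - h L (k+1)‖
          = ‖((H t' - t' • v) - (H s - s • v))
            + (1/(L:ℝ)) • (Abar s (H s - h L k))
            + (-((L:ℝ) ^ (-α))) • (sigd σ z - z)
            + (H s - h L k)‖ := by rw [halg]
        _ ≤ ‖((H t' - t' • v) - (H s - s • v))
            + (1/(L:ℝ)) • (Abar s (H s - h L k))
            + (-((L:ℝ) ^ (-α))) • (sigd σ z - z)‖ + ‖H s - h L k‖ := norm_add_le _ _
        _ ≤ ‖((H t' - t' • v) - (H s - s • v))
            + (1/(L:ℝ)) • (Abar s (H s - h L k))‖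
            + ‖(-((L:ℝ) ^ (-α))) • (sigd σ z - z)‖ + ‖H s - h L k‖ := by
            linarith [norm_add_le (((H t' - t' • v) - (H s - s • v))
              + (1/(L:ℝ)) • (Abar s (H s - h L k))) ((-((L:ℝ) ^ (-α))) • (sigd σ z - z))]
        _ ≤ ‖(H t' - t' • v) - (H s - s • v)‖
            + ‖(1/(L:ℝ)) • (Abar s (H s - h L k))‖
            + ‖(-((L:ℝ) ^ (-α))) • (sigd σ z - z)‖ + ‖H s - h L k‖ := by
            linarith [norm_add_le ((H t' - t' • v) - (H s - s • v))
              ((1/(L:ℝ)) • (Abar s (H s - h L k)))]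
        _ ≤ (M * (CH + 1) * (1/(L:ℝ)) ^ (κ/2) + CA * CH' * (1/(L:ℝ))) * (1/(L:ℝ))
            + (1/(L:ℝ)) * (CA * ‖H s - h L k‖)
            + (1/(L:ℝ)) * (C2 * D ^ 2 * (L:ℝ) ^ (-β)) + ‖H s - h L k‖ := by
            linarith [hkey1, hkey2, hkey3]
        _ = (1 + CA/(L:ℝ)) * ‖H s - h L k‖ + (1/(L:ℝ)) * ε L := by
            rw [hεL]; ring
    -- discrete Gronwall
    have ib : ∀ k ≤ L, ‖H ((k:ℝ)/(L:ℝ)) - h L k‖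
        ≤ ((k:ℝ)/(L:ℝ)) * ε L * (1 + CA/(L:ℝ)) ^ k := by
      intro k
      induction k with
      | zero => intro _; simp [hh0, hH0]
      | succ k ih =>
        intro hk1
        have hklt : k < L := hk1
        have ihk := ih (le_of_lt hklt)
        have hkey := key k hklt
        have hεLn := hεn L
        have hcn : (0:ℝ) ≤ 1 + CA/(L:ℝ) := by positivity
        have h2 : (1 + CA/(L:ℝ)) * ‖H ((k:ℝ)/(L:ℝ)) - h L k‖
            ≤ (1 + CA/(L:ℝ)) * (((k:ℝ)/(L:ℝ)) * ε L * (1 + CA/(L:ℝ)) ^ k) :=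
          mul_le_mul_of_nonneg_left ihk hcn
        have hp1 : (1:ℝ) ≤ (1 + CA/(L:ℝ)) ^ (k+1) := one_le_pow₀ (by linarith [div_nonneg hCAn (Nat.cast_nonneg L)])
        have key2 : (1/(L:ℝ)) * ε L
            ≤ (1/(L:ℝ)) * ε L * (1 + CA/(L:ℝ)) ^ (k+1) := by
          have hq : (0:ℝ) ≤ (1/(L:ℝ)) * ε L := mul_nonneg (by positivity) hεLn
          calc (1/(L:ℝ)) * ε L = (1/(L:ℝ)) * ε L * 1 := by ring
            _ ≤ (1/(L:ℝ)) * ε L * (1 + CA/(L:ℝ)) ^ (k+1) :=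
              mul_le_mul_of_nonneg_left hp1 hq
        have hcast : ((k+1:ℕ):ℝ) = (k:ℝ) + 1 := by push_cast; ring
        rw [hcast]
        calc ‖H (((k:ℝ)+1)/(L:ℝ)) - h L (k+1)‖
            ≤ (1 + CA/(L:ℝ)) * ‖H ((k:ℝ)/(L:ℝ)) - h L k‖ + (1/(L:ℝ)) * ε L := hkey
          _ ≤ (1 + CA/(L:ℝ)) * (((k:ℝ)/(L:ℝ)) * ε L * (1 + CA/(L:ℝ)) ^ k)
              + (1/(L:ℝ)) * ε L * (1 + CA/(L:ℝ)) ^ (k+1) := by linarith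
          _ = (((k:ℝ)+1)/(L:ℝ)) * ε L * (1 + CA/(L:ℝ)) ^ (k+1) := by
            rw [pow_succ]; field_simp
    have eb : ∀ k ≤ L, ‖H ((k:ℝ)/(L:ℝ)) - h L k‖ ≤ Real.exp CA * ε L := by
      intro k hk
      have h1 := ib k hk
      have hεLn := hεn L
      have hkq : ((k:ℝ)/(L:ℝ)) ≤ 1 := by
        rw [div_le_one hq0]; exact_mod_cast hk
      have h2 : (1 + CA/(L:ℝ)) ^ k ≤ Real.exp CA := by
        have ha : (1 + CA/(L:ℝ)) ≤ Real.exp (CA/(L:ℝ)) := by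
          have := Real.add_one_le_exp (CA/(L:ℝ)); linarith
        have hb : (1 + CA/(L:ℝ)) ^ k ≤ Real.exp (CA/(L:ℝ)) ^ k :=
          pow_le_pow_left₀ (by positivity) ha k
        have hc : Real.exp (CA/(L:ℝ)) ^ k = Real.exp ((k:ℝ) * (CA/(L:ℝ))) :=
          (Real.exp_nat_mul _ k).symm
        have hd' : (k:ℝ) * (CA/(L:ℝ)) ≤ CA := by
          have hkL : (k:ℝ) ≤ (L:ℝ) := by exact_mod_cast hk
          rw [mul_div_assoc', div_le_iff₀ hq0]
          have := mul_le_mul_of_nonneg_left hkL hCAn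
          linarith
        calc (1 + CA/(L:ℝ)) ^ k ≤ Real.exp (CA/(L:ℝ)) ^ k := hb
          _ = Real.exp ((k:ℝ) * (CA/(L:ℝ))) := hc
          _ ≤ Real.exp CA := Real.exp_le_exp.2 hd'
      have h3 : ((k:ℝ)/(L:ℝ)) * ε L ≤ 1 * ε L :=
        mul_le_mul_of_nonneg_right hkq hεLn
      have h4 : (0:ℝ) ≤ 1 * ε L := by rw [one_mul]; exact hεLn
      calc ‖H ((k:ℝ)/(L:ℝ)) - h L k‖
          ≤ ((k:ℝ)/(L:ℝ)) * ε L * (1 + CA/(L:ℝ)) ^ k := h1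
        _ ≤ (1 * ε L) * Real.exp CA :=
          mul_le_mul h3 h2 (pow_nonneg (by positivity) k) h4
        _ = Real.exp CA * ε L := by ring
    -- conclude the sup bound
    have hbndL : bnd L = CH' * (1/(L:ℝ)) + Real.exp CA * ε L := by rw [hbnddef]
    rw [hbndL]
    apply ciSup_le
    intro t
    show ‖H (t:ℝ) - h L ⌊(L:ℝ) * (t:ℝ)⌋₊‖ ≤ CH' * (1/(L:ℝ)) + Real.exp CA * ε L
    have ht0 : 0 ≤ (t:ℝ) := t.2.1
    have ht1 : (t:ℝ) ≤ 1 := t.2.2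
    set k : ℕ := ⌊(L:ℝ) * (t:ℝ)⌋₊ with hkdef
    have hqt0 : 0 ≤ (L:ℝ)*(t:ℝ) := by positivity
    have hkle : (k:ℝ) ≤ (L:ℝ)*(t:ℝ) := Nat.floor_le hqt0
    have hklt : (L:ℝ)*(t:ℝ) < (k:ℝ) + 1 := by
      rw [hkdef]
      exact_mod_cast Nat.lt_floor_add_one ((L:ℝ)*(t:ℝ))
    have hkL : k ≤ L := by
      have h1 : (L:ℝ)*(t:ℝ) ≤ (L:ℝ) := by
        have := mul_le_mul_of_nonneg_left ht1 hq0.le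
        linarith
      rw [hkdef]
      calc ⌊(L:ℝ)*(t:ℝ)⌋₊ ≤ ⌊(L:ℝ)⌋₊ := Nat.floor_mono h1
        _ = L := Nat.floor_natCast L
    have hsI : (k:ℝ)/(L:ℝ) ∈ Icc (0:ℝ) 1 := by
      rw [Set.mem_Icc]
      exact ⟨by positivity, by rw [div_le_one hq0]; exact_mod_cast hkL⟩
    have htk1 : (k:ℝ)/(L:ℝ) ≤ (t:ℝ) := by
      rw [div_le_iff₀ hq0]; linarith [hkle]
    have htk2 : (t:ℝ) - (k:ℝ)/(L:ℝ) ≤ 1/(L:ℝ) := by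
      have h1 : (t:ℝ) < ((k:ℝ)+1)/(L:ℝ) := by
        rw [lt_div_iff₀ hq0]; linarith [hklt]
      have h2 : ((k:ℝ)+1)/(L:ℝ) = (k:ℝ)/(L:ℝ) + 1/(L:ℝ) := by ring
      linarith
    have hlip := hHlip ((k:ℝ)/(L:ℝ)) hsI (t:ℝ) t.2
    have habs : |(t:ℝ) - (k:ℝ)/(L:ℝ)| ≤ 1/(L:ℝ) := by
      rw [abs_of_nonneg (by linarith)]; linarith
    have he := eb k hkL
    have hTri : ‖H (t:ℝ) - h L k‖
        ≤ ‖H (t:ℝ) - H ((k:ℝ)/(L:ℝ))‖ + ‖H ((k:ℝ)/(L:ℝ)) - h L k‖ := by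
      have := norm_add_le (H (t:ℝ) - H ((k:ℝ)/(L:ℝ))) (H ((k:ℝ)/(L:ℝ)) - h L k)
      simpa using this
    have h5 : ‖H (t:ℝ) - H ((k:ℝ)/(L:ℝ))‖ ≤ CH' * (1/(L:ℝ)) :=
      le_trans hlip (mul_le_mul_of_nonneg_left habs hCH'n)
    linarith
  · -- the bound tends to zero
    have l1 : Tendsto (fun L : ℕ => (1:ℝ)/(L:ℝ)) atTop (nhds 0) :=
      tendsto_one_div_atTop_nhds_zero_nat
    have l2 : Tendsto (fun L : ℕ => ((1:ℝ)/(L:ℝ)) ^ (κ/2)) atTop (nhds 0) := by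
      have hc : ContinuousAt (fun x : ℝ => x ^ (κ/2)) 0 :=
        Real.continuousAt_rpow_const 0 (κ/2) (Or.inr (by positivity))
      have := hc.tendsto.comp l1
      simpa [Function.comp_def, Real.zero_rpow (by positivity : (κ/2) ≠ 0)] using this
    have l3 : Tendsto (fun L : ℕ => ((L:ℝ)) ^ (-β)) atTop (nhds 0) :=
      (tendsto_rpow_neg_atTop hβ).comp tendsto_natCast_atTop_atTop
    have hfin : Tendsto bnd atTop (nhds (CH' * 0 + Real.exp CA *
        (M * (CH + 1) * 0 + CA * CH' * 0 + C2 * D ^ 2 * 0))) := by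
      rw [hbnddef, hεdef]
      apply Tendsto.add
      · exact l1.const_mul CH'
      · apply Tendsto.const_mul
        exact ((l2.const_mul _).add (l1.const_mul _)).add (l3.const_mul _)
    simpa using hfin
end

section
/- Uniform boundedness of hidden states. Fix d ≥ 1, an input x ∈ ℝ^d, and σ : ℝ → ℝ Lipschitz with constant C_σ and σ(0) = 0. Let α, β ≥ 0 with α + β = 1, and let Ā : [0,1] → ℝ^{d×d} and b̄ : [0,1] → ℝ^d be continuous. Set A_max = sup_{0≤t≤1} ‖Ā_t‖, b_max = sup_{0≤t≤1} ‖b̄_t‖, and C_max = A_max + b_max. For each L ∈ ℕ define h_0^{(L)} = x and h_{k+1}^{(L)} = h_k^{(L)} + L^{-α} σ_d(L^{-β}(Ā_{k/L} h_k^{(L)} + b̄_{k/L})) for k = 0,…,L−1. Then for every L ≥ 1 and every 0 ≤ j ≤ L, ‖h_j^{(L)}‖ ≤ (‖x‖ + C_σ C_max)(1 + C_σ C_max / L)^L ≤ (‖x‖ + C_σ C_max) exp(C_σ C_max). In particular, sup_L max_{0≤k≤L} ‖h_k^{(L)}‖ < ∞. -/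
open MeasureTheory Filter Set

/-- **Uniform boundedness of hidden states.**
If `σ` is Lipschitz with constant `Cσ`, `σ(0) = 0`, `α, β ≥ 0` with `α + β = 1`, and `Ā`, `b̄`
are continuous on `[0,1]`, then the ResNet hidden states
`h^{(L)}_{k+1} = h^{(L)}_k + L^{-α} σ_d(L^{-β}(Ā_{k/L} h^{(L)}_k + b̄_{k/L}))`, `h^{(L)}_0 = x`,
satisfy `‖h^{(L)}_j‖ ≤ (‖x‖ + Cσ C_max)(1 + Cσ C_max/L)^L ≤ (‖x‖ + Cσ C_max) exp(Cσ C_max)`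
for all `L ≥ 1` and `0 ≤ j ≤ L`; in particular they are bounded uniformly in `L`. -/
theorem hidden_states_uniformly_bounded
    (d : ℕ) (hd : 1 ≤ d) (x : EuclideanSpace ℝ (Fin d))
    -- activation function: Lipschitz with constant Cσ and σ(0) = 0
    (σ : ℝ → ℝ) (Cσ : NNReal) (hσLip : LipschitzWith Cσ σ) (hσ0 : σ 0 = 0)
    -- scaling exponents
    (α β : ℝ) (hα : 0 ≤ α) (hβ : 0 ≤ β) (hαβ : α + β = 1)
    -- weights
    (Abar : ℝ → (EuclideanSpace ℝ (Fin d) →L[ℝ] EuclideanSpace ℝ (Fin d)))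
    (bbar : ℝ → EuclideanSpace ℝ (Fin d))
    (hAc : ContinuousOn Abar (Icc (0:ℝ) 1))
    (hbc : ContinuousOn bbar (Icc (0:ℝ) 1))
    -- the suprema of the weight norms
    (Amax bmax Cmax : ℝ)
    (hAmax : Amax = ⨆ t : Icc (0:ℝ) 1, ‖Abar t‖)
    (hbmax : bmax = ⨆ t : Icc (0:ℝ) 1, ‖bbar t‖)
    (hCmax : Cmax = Amax + bmax)
    -- hidden states of the residual network of depth L
    (h : ℕ → ℕ → EuclideanSpace ℝ (Fin d))
    (hh0 : ∀ L : ℕ, h L 0 = x)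
    (hhrec : ∀ L : ℕ, ∀ k < L, h L (k+1) =
      h L k + ((L:ℝ) ^ (-α)) •
        sigd σ (((L:ℝ) ^ (-β)) • (Abar ((k:ℝ)/(L:ℝ)) (h L k) + bbar ((k:ℝ)/(L:ℝ))))) :
    (∀ L : ℕ, 1 ≤ L → ∀ j ≤ L,
        ‖h L j‖ ≤ (‖x‖ + (Cσ:ℝ) * Cmax) * (1 + (Cσ:ℝ) * Cmax / (L:ℝ)) ^ L ∧
        (‖x‖ + (Cσ:ℝ) * Cmax) * (1 + (Cσ:ℝ) * Cmax / (L:ℝ)) ^ L ≤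
          (‖x‖ + (Cσ:ℝ) * Cmax) * Real.exp ((Cσ:ℝ) * Cmax)) ∧
    ∃ C : ℝ, ∀ L : ℕ, 1 ≤ L → ∀ k ≤ L, ‖h L k‖ ≤ C := by
  have hA0 : 0 ≤ Amax := by
    rw [hAmax]; exact Real.iSup_nonneg fun t => norm_nonneg _
  have hb0 : 0 ≤ bmax := by
    rw [hbmax]; exact Real.iSup_nonneg fun t => norm_nonneg _
  have hCm0 : 0 ≤ Cmax := by rw [hCmax]; linarith
  set C : ℝ := (Cσ:ℝ) * Cmax with hCdef
  have hC0 : 0 ≤ C := mul_nonneg Cσ.coe_nonneg hCm0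
  have hAbdd : BddAbove (Set.range fun t : Icc (0:ℝ) 1 => ‖Abar t‖) := by
    rw [show (fun t : Icc (0:ℝ) 1 => ‖Abar t‖) = (fun a => ‖Abar a‖) ∘ Subtype.val from rfl,
      Set.range_comp, Subtype.range_coe]
    exact (isCompact_Icc.image_of_continuousOn hAc.norm).bddAbove
  have hbbdd : BddAbove (Set.range fun t : Icc (0:ℝ) 1 => ‖bbar t‖) := by
    rw [show (fun t : Icc (0:ℝ) 1 => ‖bbar t‖) = (fun a => ‖bbar a‖) ∘ Subtype.val from rfl,
      Set.range_comp, Subtype.range_coe]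
    exact (isCompact_Icc.image_of_continuousOn hbc.norm).bddAbove
  have hAle : ∀ t ∈ Icc (0:ℝ) 1, ‖Abar t‖ ≤ Amax := fun t ht => by
    rw [hAmax]; exact le_ciSup hAbdd ⟨t, ht⟩
  have hble : ∀ t ∈ Icc (0:ℝ) 1, ‖bbar t‖ ≤ bmax := fun t ht => by
    rw [hbmax]; exact le_ciSup hbbdd ⟨t, ht⟩
  -- pointwise Lipschitz bound for the componentwise activation
  have hsig : ∀ z : EuclideanSpace ℝ (Fin d), ‖sigd σ z‖ ≤ (Cσ:ℝ) * ‖z‖ := by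
    intro z
    have h1 : ∀ i, ‖sigd σ z i‖ ≤ (Cσ:ℝ) * ‖z i‖ := by
      intro i
      have := hσLip.dist_le_mul (z i) 0
      simpa [sigd, hσ0, Real.dist_eq] using this
    have h2 : (Cσ:ℝ) * ‖z‖ = Real.sqrt (∑ i, ((Cσ:ℝ) * ‖z i‖) ^ 2) := by
      rw [EuclideanSpace.norm_eq,
        ← Real.sqrt_sq Cσ.coe_nonneg, ← Real.sqrt_mul (sq_nonneg _), Finset.mul_sum]
      congr 1
      refine Finset.sum_congr rfl fun i _ => by rw [mul_pow, Real.sq_sqrt (sq_nonneg (Cσ:ℝ))]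
    rw [EuclideanSpace.norm_eq, h2]
    apply Real.sqrt_le_sqrt
    refine Finset.sum_le_sum fun i _ => ?_
    have := h1 i
    nlinarith [norm_nonneg (sigd σ z i), norm_nonneg (z i)]
  -- main induction
  have key : ∀ L : ℕ, 1 ≤ L → ∀ j ≤ L,
      ‖h L j‖ ≤ (‖x‖ + (j:ℝ) * C / L) * (1 + C / L) ^ j := by
    intro L hL
    have hLpos : (0:ℝ) < L := by exact_mod_cast hL
    have honele : (1:ℝ) ≤ 1 + C / L := by
      have : (0:ℝ) ≤ C / L := div_nonneg hC0 hLpos.le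
      linarith
    intro j
    induction j with
    | zero => intro _; simp [hh0 L]
    | succ k ih =>
      intro hkL
      have hk : k < L := hkL
      have ihk := ih (le_of_lt hk)
      have hmem : (k:ℝ)/(L:ℝ) ∈ Icc (0:ℝ) 1 := by
        constructor
        · positivity
        · rw [div_le_one hLpos]; exact_mod_cast hk.le
      have hstep : ‖h L (k+1)‖ ≤ ‖h L k‖ + (C * ‖h L k‖ + C) / L := by
        rw [hhrec L k hk]
        refine (norm_add_le _ _).trans ?_
        gcongr
        set w := Abar ((k:ℝ)/(L:ℝ)) (h L k) + bbar ((k:ℝ)/(L:ℝ)) with hw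
        have hAb : ‖w‖ ≤ Amax * ‖h L k‖ + bmax := by
          refine (norm_add_le _ _).trans ?_
          have h1 : ‖Abar ((k:ℝ)/(L:ℝ)) (h L k)‖ ≤ Amax * ‖h L k‖ :=
            ((Abar _).le_opNorm _).trans
              (mul_le_mul_of_nonneg_right (hAle _ hmem) (norm_nonneg _))
          linarith [hble _ hmem]
        have h2 : ‖((L:ℝ) ^ (-α)) • sigd σ (((L:ℝ)^(-β)) • w)‖
            = (L:ℝ)^(-α) * ‖sigd σ (((L:ℝ)^(-β)) • w)‖ := by
          rw [norm_smul, Real.norm_eq_abs, abs_of_nonneg (Real.rpow_nonneg hLpos.le _)]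
        rw [h2]
        have h3 : ‖sigd σ (((L:ℝ)^(-β)) • w)‖ ≤ (Cσ:ℝ) * ((L:ℝ)^(-β) * ‖w‖) := by
          refine (hsig _).trans ?_
          rw [norm_smul, Real.norm_eq_abs, abs_of_nonneg (Real.rpow_nonneg hLpos.le _)]
        have hprod : (L:ℝ)^(-α) * (L:ℝ)^(-β) = 1 / L := by
          rw [← Real.rpow_add hLpos, show -α + -β = -1 by linarith]
          rw [Real.rpow_neg_one, one_div]
        calc (L:ℝ)^(-α) * ‖sigd σ (((L:ℝ)^(-β)) • w)‖
            ≤ (L:ℝ)^(-α) * ((Cσ:ℝ) * ((L:ℝ)^(-β) * ‖w‖)) := by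
              exact mul_le_mul_of_nonneg_left h3 (Real.rpow_nonneg hLpos.le _)
          _ = ((L:ℝ)^(-α) * (L:ℝ)^(-β)) * ((Cσ:ℝ) * ‖w‖) := by ring
          _ = ((Cσ:ℝ) * ‖w‖) / L := by rw [hprod]; ring
          _ ≤ (C * ‖h L k‖ + C) / L := by
              apply div_le_div_of_nonneg_right ?_ hLpos.le
              · rw [hCdef, hCmax]
                nlinarith [mul_le_mul_of_nonneg_left hAb Cσ.coe_nonneg,
                  mul_nonneg (mul_nonneg Cσ.coe_nonneg hb0) (norm_nonneg (h L k)),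
                  mul_nonneg Cσ.coe_nonneg hA0]
      have hpow1 : (1:ℝ) ≤ (1 + C/L)^(k+1) := one_le_pow₀ honele
      calc ‖h L (k+1)‖ ≤ ‖h L k‖ + (C * ‖h L k‖ + C)/L := hstep
        _ = ‖h L k‖ * (1 + C/L) + C/L := by field_simp; ring
        _ ≤ ((‖x‖ + (k:ℝ)*C/L)*(1+C/L)^k) * (1+C/L) + (C/L) * (1+C/L)^(k+1) := by
            refine add_le_add (mul_le_mul_of_nonneg_right ihk (by linarith)) ?_
            exact le_mul_of_one_le_right (div_nonneg hC0 hLpos.le) hpow1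
        _ = (‖x‖ + ((k:ℕ)+1:ℝ)*C/L) * (1+C/L)^(k+1) := by ring
        _ = (‖x‖ + ((k+1:ℕ):ℝ)*C/L) * (1+C/L)^(k+1) := by push_cast; ring
  have hexp : ∀ L : ℕ, 1 ≤ L → (1 + C/(L:ℝ))^L ≤ Real.exp C := by
    intro L hL
    have hLpos : (0:ℝ) < L := by exact_mod_cast hL
    have h1 : (1 + C/(L:ℝ)) ≤ Real.exp (C/L) := by
      have := Real.add_one_le_exp (C/(L:ℝ)); linarith
    calc (1 + C/(L:ℝ))^L ≤ (Real.exp (C/L))^L := by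
          apply pow_le_pow_left₀ (by positivity) h1
      _ = Real.exp ((L:ℝ) * (C/L)) := by rw [Real.exp_nat_mul]
      _ = Real.exp C := by rw [mul_div_cancel₀ _ hLpos.ne']
  have main : ∀ L : ℕ, 1 ≤ L → ∀ j ≤ L,
      ‖h L j‖ ≤ (‖x‖ + C) * (1 + C / (L:ℝ)) ^ L ∧
      (‖x‖ + C) * (1 + C / (L:ℝ)) ^ L ≤ (‖x‖ + C) * Real.exp C := by
    intro L hL j hj
    have hLpos : (0:ℝ) < L := by exact_mod_cast hL
    have honele : (1:ℝ) ≤ 1 + C / L := by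
      have : (0:ℝ) ≤ C / L := div_nonneg hC0 hLpos.le
      linarith
    constructor
    · refine (key L hL j hj).trans ?_
      have h1 : (j:ℝ)*C/L ≤ C := by
        rw [div_le_iff₀ hLpos]
        have : (j:ℝ) ≤ L := by exact_mod_cast hj
        nlinarith
      have h2 : (1+C/L)^j ≤ (1+C/L)^L := pow_le_pow_right₀ honele hj
      have h3 : (0:ℝ) ≤ ‖x‖ + (j:ℝ)*C/L := by positivity
      have h4 : (0:ℝ) ≤ (1+C/L)^j := by positivity
      nlinarith [norm_nonneg x]
    · exact mul_le_mul_of_nonneg_left (hexp L hL) (by positivity)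
  exact ⟨main, ⟨(‖x‖ + C) * Real.exp C, fun L hL k hk =>
    ((main L hL k hk).1).trans (main L hL k hk).2⟩⟩
end

section
/- Uniqueness of the trend–noise decomposition of Scaling regime 2. Fix d ≥ 1 and β ∈ [0,1). Let Ā, Ā' : [0,1] → ℝ^{d×d} be continuous and W, W' : [0,1] → ℝ^{d×d} be continuous with W_0 = W'_0 = 0. Suppose that for every L ∈ ℕ and every 0 ≤ k < L, L^{-β} Ā_{k/L} + (W_{(k+1)/L} − W_{k/L}) = L^{-β} Ā'_{k/L} + (W'_{(k+1)/L} − W'_{k/L}). Then Ā = Ā' on [0,1] and W = W' on [0,1]. -/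
open MeasureTheory Filter Set

set_option maxHeartbeats 4000000

private lemma sum_sub_const_aux {E : Type*} [AddCommGroup E] [Module ℝ E]
    (f : ℕ → E) (x : E) (s : Finset ℕ) :
    ∑ j ∈ s, (f j - x) = (∑ j ∈ s, f j) - (s.card : ℝ) • x := by
  rw [Finset.sum_sub_distrib, Finset.sum_const, Nat.cast_smul_eq_nsmul]

/-- **Uniqueness of the trend–noise decomposition of Scaling regime 2.**
Fix `β ∈ [0,1)`. If `Ā, Ā'` are continuous on `[0,1]`, `W, W'` are continuous on `[0,1]` with
`W_0 = W'_0 = 0`, and for every `L ∈ ℕ` and `0 ≤ k < L`,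
`L^{-β} Ā_{k/L} + (W_{(k+1)/L} − W_{k/L}) = L^{-β} Ā'_{k/L} + (W'_{(k+1)/L} − W'_{k/L})`,
then `Ā = Ā'` on `[0,1]` and `W = W'` on `[0,1]`. -/
theorem trend_noise_decomposition_unique
    (d : ℕ) (hd : 1 ≤ d) (β : ℝ) (hβ0 : 0 ≤ β) (hβ1 : β < 1)
    (Abar Abar' W W' : ℝ → EuclideanSpace ℝ (Fin d × Fin d))
    (hAc : ContinuousOn Abar (Icc (0:ℝ) 1))
    (hAc' : ContinuousOn Abar' (Icc (0:ℝ) 1))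
    (hWc : ContinuousOn W (Icc (0:ℝ) 1))
    (hWc' : ContinuousOn W' (Icc (0:ℝ) 1))
    (hW0 : W 0 = 0) (hW0' : W' 0 = 0)
    (hdecomp : ∀ L : ℕ, ∀ k < L,
      ((L:ℝ) ^ (-β)) • Abar ((k:ℝ)/(L:ℝ)) + (W (((k:ℝ)+1)/(L:ℝ)) - W ((k:ℝ)/(L:ℝ))) =
      ((L:ℝ) ^ (-β)) • Abar' ((k:ℝ)/(L:ℝ)) + (W' (((k:ℝ)+1)/(L:ℝ)) - W' ((k:ℝ)/(L:ℝ)))) :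
    (∀ t ∈ Icc (0:ℝ) 1, Abar t = Abar' t) ∧ (∀ t ∈ Icc (0:ℝ) 1, W t = W' t) := by
  set V : ℝ → EuclideanSpace ℝ (Fin d × Fin d) := fun t => W t - W' t with hVdef
  set D : ℝ → EuclideanSpace ℝ (Fin d × Fin d) := fun t => Abar t - Abar' t with hDdef
  have hVc : ContinuousOn V (Icc (0:ℝ) 1) := hWc.sub hWc'
  have hDc : ContinuousOn D (Icc (0:ℝ) 1) := hAc.sub hAc'
  have hV0 : V 0 = 0 := by simp [hVdef, hW0, hW0']
  -- step recursion
  have hstep : ∀ L : ℕ, ∀ k, k < L →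
      V (((k:ℝ)+1)/(L:ℝ)) = V ((k:ℝ)/(L:ℝ)) - ((L:ℝ)^(-β)) • D ((k:ℝ)/(L:ℝ)) := by
    intro L k hk
    have h := hdecomp L k hk
    have h2 : (((L:ℝ)^(-β)) • Abar ((k:ℝ)/(L:ℝ)) + (W (((k:ℝ)+1)/(L:ℝ)) - W ((k:ℝ)/(L:ℝ))))
        - (((L:ℝ)^(-β)) • Abar' ((k:ℝ)/(L:ℝ)) + (W' (((k:ℝ)+1)/(L:ℝ)) - W' ((k:ℝ)/(L:ℝ))))
        = V (((k:ℝ)+1)/(L:ℝ)) - (V ((k:ℝ)/(L:ℝ)) - ((L:ℝ)^(-β)) • D ((k:ℝ)/(L:ℝ))) := by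
      simp only [hVdef, hDdef, smul_sub]
      abel
    rw [h, sub_self] at h2
    exact (sub_eq_zero.mp h2.symm)
  -- telescoping
  have htel : ∀ L : ℕ, ∀ k, k ≤ L →
      V ((k:ℝ)/(L:ℝ)) = (-((L:ℝ)^(-β))) • ∑ j ∈ Finset.range k, D ((j:ℝ)/(L:ℝ)) := by
    intro L k
    induction k with
    | zero => intro _; simp [hV0]
    | succ k ih =>
      intro hk
      have hkL : k < L := hk
      have hk' : k ≤ L := le_of_lt hkL
      have hrec : V (((k:ℝ)+1)/(L:ℝ)) = V ((k:ℝ)/(L:ℝ)) - ((L:ℝ)^(-β)) • D ((k:ℝ)/(L:ℝ)) :=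
        hstep L k hkL
      rw [ih hk'] at hrec
      have hcast : (((k+1:ℕ)):ℝ) = (k:ℝ) + 1 := by push_cast; ring
      rw [hcast, hrec, Finset.sum_range_succ]
      simp only [neg_smul, smul_add]
      abel
  -- bound on V
  obtain ⟨C, hC⟩ := (isCompact_Icc (a := (0:ℝ)) (b := 1)).exists_bound_of_continuousOn hVc
  have hC0 : (0:ℝ) ≤ C := le_trans (norm_nonneg _) (hC 0 ⟨le_rfl, zero_le_one⟩)
  -- D vanishes on Ico 0 1
  have hDzero : ∀ t ∈ Ico (0:ℝ) 1, D t = 0 := by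
    intro t ht
    rw [← norm_le_zero_iff]
    refine le_of_forall_pos_le_add ?_
    intro ε hε
    rw [zero_add]
    have hcw : ContinuousWithinAt D (Icc (0:ℝ) 1) t := hDc t ⟨ht.1, le_of_lt ht.2⟩
    obtain ⟨δ, hδ0, hδ⟩ := Metric.continuousWithinAt_iff.mp hcw (ε/2) (by linarith)
    set δ' := min δ (1 - t) with hδ'def
    have hδ'0 : 0 < δ' := lt_min hδ0 (by linarith [ht.2])
    have hδ'δ : δ' ≤ δ := min_le_left _ _
    have hδ't : δ' ≤ 1 - t := min_le_right _ _
    have h1 : Tendsto (fun n : ℕ => ((n:ℝ))^(1-β)) atTop atTop :=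
      (tendsto_rpow_atTop (by linarith)).comp tendsto_natCast_atTop_atTop
    have h2 : Tendsto (fun n : ℕ => ((n:ℝ))) atTop atTop := tendsto_natCast_atTop_atTop
    obtain ⟨L, hLβ, hLδ⟩ := ((h1.eventually_ge_atTop (8*C/(ε*δ'))).and
      (h2.eventually_ge_atTop (2/δ'))).exists
    have hL1 : 1 ≤ L := by
      by_contra h
      push_neg at h
      interval_cases L
      · simp only [Nat.cast_zero] at hLδ
        have : (0:ℝ) < 2/δ' := by positivity
        linarith
    have hLpos : (0:ℝ) < L := by exact_mod_cast hL1
    set k0 := ⌊t * L⌋₊ with hk0def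
    set m := ⌊δ' * L⌋₊ with hmdef
    have hδ'L2 : (2:ℝ) ≤ δ' * L := by
      rw [div_le_iff₀ hδ'0] at hLδ
      linarith [mul_comm δ' (L:ℝ)]
    have hm1 : 1 ≤ m := Nat.le_floor (by push_cast; linarith)
    have hmlow : δ' * L / 2 ≤ (m:ℝ) := by
      have h' := Nat.sub_one_lt_floor (δ' * L)
      linarith
    have hmup : (m:ℝ) ≤ δ' * L := Nat.floor_le (by positivity)
    have hk0up : (k0:ℝ) ≤ t * L := Nat.floor_le (mul_nonneg ht.1 (le_of_lt hLpos))
    have hk0low : t * L - 1 < (k0:ℝ) := Nat.sub_one_lt_floor _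
    have hkmL : k0 + m ≤ L := by
      have hr : ((k0 + m:ℕ):ℝ) ≤ (L:ℝ) := by
        push_cast
        have : δ' * L ≤ (1 - t) * L :=
          mul_le_mul_of_nonneg_right hδ't (le_of_lt hLpos)
        nlinarith
      exact_mod_cast hr
    -- the window sum
    set S := ∑ j ∈ Finset.Ico k0 (k0+m), D ((j:ℝ)/(L:ℝ)) with hSdef
    have hSeq : V (((k0+m:ℕ):ℝ)/(L:ℝ)) - V ((k0:ℝ)/(L:ℝ)) = (-((L:ℝ)^(-β))) • S := by
      rw [htel L (k0+m) hkmL, htel L k0 (le_trans (Nat.le_add_right _ _) hkmL),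
        hSdef, Finset.sum_Ico_eq_sub _ (Nat.le_add_right _ _), smul_sub]
    have haLpos : (0:ℝ) < (L:ℝ)^(-β) := Real.rpow_pos_of_pos hLpos _
    have hSnorm : ‖S‖ ≤ 2 * C * (L:ℝ)^β := by
      have h1' : ‖V (((k0+m:ℕ):ℝ)/(L:ℝ)) - V ((k0:ℝ)/(L:ℝ))‖ = (L:ℝ)^(-β) * ‖S‖ := by
        rw [hSeq, norm_smul, Real.norm_eq_abs, abs_neg, abs_of_pos haLpos]
      have hmem1 : ((k0+m:ℕ):ℝ)/(L:ℝ) ∈ Icc (0:ℝ) 1 := by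
        constructor
        · positivity
        · rw [div_le_one hLpos]; exact_mod_cast hkmL
      have hmem2 : ((k0:ℕ):ℝ)/(L:ℝ) ∈ Icc (0:ℝ) 1 := by
        constructor
        · positivity
        · rw [div_le_one hLpos]
          exact_mod_cast le_trans (Nat.le_add_right _ m) hkmL
      have hb : ‖V (((k0+m:ℕ):ℝ)/(L:ℝ)) - V ((k0:ℝ)/(L:ℝ))‖ ≤ 2*C := by
        calc ‖V (((k0+m:ℕ):ℝ)/(L:ℝ)) - V ((k0:ℝ)/(L:ℝ))‖
            ≤ ‖V (((k0+m:ℕ):ℝ)/(L:ℝ))‖ + ‖V ((k0:ℝ)/(L:ℝ))‖ := norm_sub_le _ _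
          _ ≤ C + C := add_le_add (hC _ hmem1) (hC _ hmem2)
          _ = 2*C := by ring
      rw [h1'] at hb
      have hpow : (L:ℝ)^(-β) * (L:ℝ)^β = 1 := by
        rw [← Real.rpow_add hLpos]; simp
      calc ‖S‖ = ((L:ℝ)^(-β) * ‖S‖) * (L:ℝ)^β := by
            rw [mul_comm ((L:ℝ)^(-β)) ‖S‖, mul_assoc, hpow, mul_one]
        _ ≤ (2*C) * (L:ℝ)^β := by
            apply mul_le_mul_of_nonneg_right hb (le_of_lt (Real.rpow_pos_of_pos hLpos _))
        _ = 2 * C * (L:ℝ)^β := by ring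
    -- each window point is δ-close to t
    have hwin : ∀ j ∈ Finset.Ico k0 (k0+m), ‖D ((j:ℝ)/(L:ℝ)) - D t‖ ≤ ε/2 := by
      intro j hj
      rw [Finset.mem_Ico] at hj
      have hj1 : (k0:ℝ) ≤ (j:ℝ) := by exact_mod_cast hj.1
      have hj2 : (j:ℝ) < (k0:ℝ) + (m:ℝ) := by exact_mod_cast hj.2
      have hjL : (j:ℝ) ≤ (L:ℝ) := by
        exact_mod_cast le_of_lt (lt_of_lt_of_le hj.2 hkmL)
      have hmem : (j:ℝ)/(L:ℝ) ∈ Icc (0:ℝ) 1 := ⟨by positivity, by rw [div_le_one hLpos]; exact hjL⟩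
      have hdist : dist ((j:ℝ)/(L:ℝ)) t < δ := by
        rw [Real.dist_eq, abs_sub_lt_iff]
        have hLinv : 1/(L:ℝ) ≤ δ'/2 := by
          rw [div_le_iff₀ hLpos]
          rw [div_le_iff₀ hδ'0] at hLδ
          nlinarith
        constructor
        · -- j/L - t < δ : j < k0 + m ≤ tL + δ'L
          have hup : (j:ℝ)/(L:ℝ) < t + δ := by
            rw [div_lt_iff₀ hLpos]
            nlinarith
          linarith
        · -- t - j/L < δ : t - k0/L < 1/L
          have hlo : t - δ < (j:ℝ)/(L:ℝ) := by
            rw [lt_div_iff₀ hLpos]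
            have hδL : δ' * (L:ℝ) ≤ δ * (L:ℝ) :=
              mul_le_mul_of_nonneg_right hδ'δ (le_of_lt hLpos)
            nlinarith
          linarith
      have := hδ hmem hdist
      rw [dist_eq_norm] at this
      exact le_of_lt this
    -- combine
    have hcard : (Finset.Ico k0 (k0+m)).card = m := by
      rw [Nat.card_Ico]; omega
    have hsum0 := sum_sub_const_aux (fun j : ℕ => D ((j:ℝ)/(L:ℝ))) (D t) (Finset.Ico k0 (k0+m))
    rw [hcard] at hsum0
    have hsum : (m:ℝ) • D t = S - ∑ j ∈ Finset.Ico k0 (k0+m), (D ((j:ℝ)/(L:ℝ)) - D t) := by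
      rw [hsum0]
      abel
    have hnormsum : ‖∑ j ∈ Finset.Ico k0 (k0+m), (D ((j:ℝ)/(L:ℝ)) - D t)‖ ≤ (m:ℝ) * (ε/2) := by
      calc ‖∑ j ∈ Finset.Ico k0 (k0+m), (D ((j:ℝ)/(L:ℝ)) - D t)‖
          ≤ ∑ j ∈ Finset.Ico k0 (k0+m), ‖D ((j:ℝ)/(L:ℝ)) - D t‖ := norm_sum_le _ _
        _ ≤ ∑ _j ∈ Finset.Ico k0 (k0+m), (ε/2) := Finset.sum_le_sum hwin
        _ = (m:ℝ) * (ε/2) := by rw [Finset.sum_const, hcard, nsmul_eq_mul]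
    have hmD : (m:ℝ) * ‖D t‖ ≤ 2*C*(L:ℝ)^β + (m:ℝ)*(ε/2) := by
      have : ‖(m:ℝ) • D t‖ ≤ ‖S‖ + ‖∑ j ∈ Finset.Ico k0 (k0+m), (D ((j:ℝ)/(L:ℝ)) - D t)‖ := by
        rw [hsum]; exact norm_sub_le _ _
      rw [norm_smul, Real.norm_eq_abs, abs_of_nonneg (Nat.cast_nonneg m)] at this
      linarith [hSnorm, hnormsum]
    -- final arithmetic
    have hmpos : (0:ℝ) < m := by exact_mod_cast hm1
    have hLsplit : (L:ℝ) = (L:ℝ)^β * (L:ℝ)^(1-β) := by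
      rw [← Real.rpow_add hLpos]; norm_num
    have hβpos : (0:ℝ) < (L:ℝ)^β := Real.rpow_pos_of_pos hLpos _
    have hkey : 2*C*(L:ℝ)^β ≤ (m:ℝ) * (ε/2) := by
      -- m ≥ δ'L/2, L = L^β L^{1-β}, L^{1-β} ≥ 8C/(εδ')
      have h8 : 8*C ≤ ε*δ'*(L:ℝ)^(1-β) := by
        rw [div_le_iff₀ (by positivity)] at hLβ
        nlinarith
      nlinarith [mul_pos hε hδ'0, hmlow, hLsplit]
    have : (m:ℝ) * ‖D t‖ ≤ (m:ℝ) * ε := by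
      calc (m:ℝ) * ‖D t‖ ≤ 2*C*(L:ℝ)^β + (m:ℝ)*(ε/2) := hmD
        _ ≤ (m:ℝ)*(ε/2) + (m:ℝ)*(ε/2) := by linarith
        _ = (m:ℝ) * ε := by ring
    exact le_of_mul_le_mul_left (by linarith) hmpos
  -- D vanishes at 1 by continuity
  have hD1 : D 1 = 0 := by
    have hseq : Tendsto (fun n : ℕ => 1 - 1/(n:ℝ)) atTop (nhds 1) := by
      have h := tendsto_one_div_atTop_nhds_zero_nat (𝕜 := ℝ)
      simpa using tendsto_const_nhds.sub h
    have hmemIco : ∀ n : ℕ, 1 ≤ n → (1 - 1/(n:ℝ)) ∈ Ico (0:ℝ) 1 := by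
      intro n hn
      have hn' : (1:ℝ) ≤ n := by exact_mod_cast hn
      constructor
      · have : 1/(n:ℝ) ≤ 1 := by rw [div_le_one (by linarith)]; linarith
        linarith
      · have : 0 < 1/(n:ℝ) := by positivity
        linarith
    have hmem : ∀ᶠ n : ℕ in atTop, (1 - 1/(n:ℝ)) ∈ Icc (0:ℝ) 1 := by
      filter_upwards [eventually_ge_atTop 1] with n hn
      exact Ico_subset_Icc_self (hmemIco n hn)
    have h2 : Tendsto (fun n : ℕ => D (1 - 1/(n:ℝ))) atTop (nhds (D 1)) :=
      ((hDc 1 ⟨zero_le_one, le_rfl⟩).tendsto).comp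
        (tendsto_nhdsWithin_of_tendsto_nhds_of_eventually_within _ hseq hmem)
    have h3 : ∀ᶠ n : ℕ in atTop, D (1 - 1/(n:ℝ)) = 0 := by
      filter_upwards [eventually_ge_atTop 1] with n hn
      exact hDzero _ (hmemIco n hn)
    exact tendsto_nhds_unique h2 (tendsto_const_nhds.congr' (h3.mono fun n h => h.symm))
  have hDall : ∀ t ∈ Icc (0:ℝ) 1, D t = 0 := by
    intro t ht
    rcases eq_or_lt_of_le ht.2 with h|h
    · rw [h]; exact hD1
    · exact hDzero t ⟨ht.1, h⟩
  -- V vanishes at grid points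
  have hVgrid : ∀ L : ℕ, ∀ k, k ≤ L → V ((k:ℝ)/(L:ℝ)) = 0 := by
    intro L k hk
    rw [htel L k hk]
    have hz : ∑ j ∈ Finset.range k, D ((j:ℝ)/(L:ℝ)) = 0 := by
      apply Finset.sum_eq_zero
      intro j hj
      rw [Finset.mem_range] at hj
      have hL0 : 0 < L := lt_of_le_of_lt (Nat.zero_le j) (lt_of_lt_of_le hj hk)
      have hLr : (0:ℝ) < L := by exact_mod_cast hL0
      apply hDall
      constructor
      · positivity
      · rw [div_le_one hLr]
        exact_mod_cast le_of_lt (lt_of_lt_of_le hj hk)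
    rw [hz, smul_zero]
  -- V vanishes everywhere on [0,1]
  have hVall : ∀ t ∈ Icc (0:ℝ) 1, V t = 0 := by
    intro t ht
    set x : ℕ → ℝ := fun n => ((⌊t * (n:ℝ)⌋₊ : ℕ):ℝ)/((n:ℝ)) with hxdef
    have hfloorle : ∀ n : ℕ, ⌊t * (n:ℝ)⌋₊ ≤ n := by
      intro n
      have h1 : t * (n:ℝ) ≤ (n:ℝ) := by nlinarith [ht.1, ht.2, Nat.cast_nonneg (α := ℝ) n]
      calc ⌊t * (n:ℝ)⌋₊ ≤ ⌊((n:ℕ):ℝ)⌋₊ := Nat.floor_le_floor h1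
        _ = n := Nat.floor_natCast n
    have hVx : ∀ n : ℕ, V (x n) = 0 := fun n => hVgrid n _ (hfloorle n)
    have hxmem : ∀ n : ℕ, x n ∈ Icc (0:ℝ) 1 := by
      intro n
      rcases Nat.eq_zero_or_pos n with h|h
      · subst h; simp [hxdef]
      · have hn : (0:ℝ) < n := by exact_mod_cast h
        constructor
        · positivity
        · rw [hxdef, div_le_one hn]
          exact_mod_cast hfloorle n
    have hxle : ∀ n : ℕ, x n ≤ t := by
      intro n
      rcases Nat.eq_zero_or_pos n with h|h
      · subst h; simpa [hxdef] using ht.1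
      · have hn : (0:ℝ) < n := by exact_mod_cast h
        rw [hxdef, div_le_iff₀ hn]
        calc ((⌊t * (n:ℝ)⌋₊:ℕ):ℝ) ≤ t * n := Nat.floor_le (mul_nonneg ht.1 (le_of_lt hn))
          _ = t * n := rfl
    have hxge : ∀ᶠ n : ℕ in atTop, t - 1/(n:ℝ) ≤ x n := by
      filter_upwards [eventually_ge_atTop 1] with n hn
      have hnr : (0:ℝ) < n := by exact_mod_cast hn
      rw [hxdef, le_div_iff₀ hnr]
      have hfl := Nat.sub_one_lt_floor (t * (n:ℝ))
      have : (t - 1/(n:ℝ)) * n = t * n - 1 := by field_simp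
      linarith
    have hlow : Tendsto (fun n : ℕ => t - 1/(n:ℝ)) atTop (nhds t) := by
      have h := tendsto_one_div_atTop_nhds_zero_nat (𝕜 := ℝ)
      simpa using tendsto_const_nhds.sub h
    have hxt : Tendsto x atTop (nhds t) :=
      tendsto_of_tendsto_of_tendsto_of_le_of_le' hlow tendsto_const_nhds hxge
        (Eventually.of_forall hxle)
    have hcomp : Tendsto (fun n : ℕ => V (x n)) atTop (nhds (V t)) :=
      ((hVc t ht).tendsto).comp
        (tendsto_nhdsWithin_of_tendsto_nhds_of_eventually_within _ hxt
          (Eventually.of_forall hxmem))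
    exact tendsto_nhds_unique hcomp
      (tendsto_const_nhds.congr (fun n => (hVx n).symm))
  refine ⟨fun t ht => ?_, fun t ht => ?_⟩
  · have h := hDall t ht
    rw [hDdef] at h
    exact sub_eq_zero.mp h
  · have h := hVall t ht
    rw [hVdef] at h
    exact sub_eq_zero.mp h
end
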